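/- arXiv:2605.31028 — 10 statements merged into one kernel-verified Lean document; each statement's English description precedes it below -/
import Mathlib

section
/- Let c ∈ ℝ, let J ⊆ (0,∞) be an open interval, and let u : ℝ → ℝ be twice continuously differentiable on J with u(t) > 0 and 5t²·u''(t) + t·u'(t) - 3·u(t) + 5c·t² - 8t = 0 for all t ∈ J. Let I be an open interval and φ : ℝ → ℝ a function with φ(I) ⊆ J such that deriv φ r = -√(u(φ(r))) for all r ∈ I. Then φ is three times differentiable on I and for every r ∈ I one has 10·φ(r)²·φ'''(r) + 2·φ(r)·φ''(r)·φ'(r) - 3·φ'(r)³ + 5c·φ(r)²·φ'(r) - 8·φ(r)·φ'(r) = 0; equivalently, since φ'(r) = -√(u(φ(r))) < 0, the equation 10·φ(r)²·φ'''(r)/φ'(r) + 2·φ(r)·φ''(r) - 3·φ'(r)² + 5c·φ(r)² - 8·φ(r) = 0 holds. -/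
/-- the change of variables `t = φ(r)`, `φ'(r) = -√(u(φ(r)))`, transforms the
second-order linear ODE `5 t² u'' + t u' - 3 u + 5 c t² - 8 t = 0` into the third-order ODE
`10 φ² φ''' / φ' + 2 φ φ'' - 3 φ'² + 5 c φ² - 8 φ = 0`. -/
theorem stmt2 (c j₁ j₂ i₁ i₂ : ℝ) (u φ : ℝ → ℝ)
    (hJ : Set.Ioo j₁ j₂ ⊆ Set.Ioi (0 : ℝ))
    (hu1 : ∀ t ∈ Set.Ioo j₁ j₂, DifferentiableAt ℝ u t)
    (hu2 : ∀ t ∈ Set.Ioo j₁ j₂, DifferentiableAt ℝ (deriv u) t)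
    (hu3 : ContinuousOn (deriv (deriv u)) (Set.Ioo j₁ j₂))
    (hupos : ∀ t ∈ Set.Ioo j₁ j₂, 0 < u t)
    (hode : ∀ t ∈ Set.Ioo j₁ j₂,
      5 * t ^ 2 * deriv (deriv u) t + t * deriv u t - 3 * u t + 5 * c * t ^ 2 - 8 * t = 0)
    (hmaps : Set.MapsTo φ (Set.Ioo i₁ i₂) (Set.Ioo j₁ j₂))
    (hphi : ∀ r ∈ Set.Ioo i₁ i₂, deriv φ r = -Real.sqrt (u (φ r))) :
    ∀ r ∈ Set.Ioo i₁ i₂,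
      DifferentiableAt ℝ φ r ∧ DifferentiableAt ℝ (deriv φ) r ∧
      DifferentiableAt ℝ (deriv (deriv φ)) r ∧
      10 * (φ r) ^ 2 * deriv (deriv (deriv φ)) r
        + 2 * φ r * deriv (deriv φ) r * deriv φ r
        - 3 * (deriv φ r) ^ 3
        + 5 * c * (φ r) ^ 2 * deriv φ r
        - 8 * φ r * deriv φ r = 0 ∧
      deriv φ r < 0 ∧
      10 * (φ r) ^ 2 * deriv (deriv (deriv φ)) r / deriv φ r
        + 2 * φ r * deriv (deriv φ) r
        - 3 * (deriv φ r) ^ 2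
        + 5 * c * (φ r) ^ 2
        - 8 * φ r = 0 := by
  have hsqpos : ∀ r ∈ Set.Ioo i₁ i₂, 0 < Real.sqrt (u (φ r)) := fun r hr =>
    Real.sqrt_pos.2 (hupos _ (hmaps hr))
  have hdneg : ∀ r ∈ Set.Ioo i₁ i₂, deriv φ r < 0 := fun r hr => by
    rw [hphi r hr]; exact neg_neg_iff_pos.2 (hsqpos r hr)
  have key1 : ∀ r ∈ Set.Ioo i₁ i₂, DifferentiableAt ℝ φ r := fun r hr =>
    differentiableAt_of_deriv_ne_zero (ne_of_lt (hdneg r hr))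
  have key2 : ∀ r ∈ Set.Ioo i₁ i₂,
      HasDerivAt (deriv φ) (deriv u (φ r) / 2) r := by
    intro r hr
    have ht := hmaps hr
    have hupos' := hupos _ ht
    have hsq := hsqpos r hr
    have hφ : HasDerivAt φ (deriv φ r) r := (key1 r hr).hasDerivAt
    have hu' : HasDerivAt u (deriv u (φ r)) (φ r) := (hu1 _ ht).hasDerivAt
    have hsqrt : HasDerivAt Real.sqrt (1 / (2 * Real.sqrt (u (φ r)))) (u (φ r)) :=
      Real.hasDerivAt_sqrt (ne_of_gt hupos')
    have hcomp : HasDerivAt (fun x => -Real.sqrt (u (φ x)))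
        (-(1 / (2 * Real.sqrt (u (φ r))) * deriv u (φ r) * deriv φ r)) r := by
      exact ((hsqrt.comp (φ r) hu').comp r hφ).neg
    have hev : (fun x => -Real.sqrt (u (φ x))) =ᶠ[nhds r] deriv φ :=
      Filter.eventuallyEq_of_mem (isOpen_Ioo.mem_nhds hr) (fun x hx => (hphi x hx).symm)
    have h2 := hcomp.congr_of_eventuallyEq hev.symm
    refine h2.congr_deriv ?_
    rw [hphi r hr]
    field_simp
  have key2' : ∀ r ∈ Set.Ioo i₁ i₂, deriv (deriv φ) r = deriv u (φ r) / 2 :=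
    fun r hr => (key2 r hr).deriv
  have key3 : ∀ r ∈ Set.Ioo i₁ i₂,
      HasDerivAt (deriv (deriv φ)) (deriv (deriv u) (φ r) * deriv φ r / 2) r := by
    intro r hr
    have ht := hmaps hr
    have hφ : HasDerivAt φ (deriv φ r) r := (key1 r hr).hasDerivAt
    have hu'' : HasDerivAt (deriv u) (deriv (deriv u) (φ r)) (φ r) := (hu2 _ ht).hasDerivAt
    have hcomp : HasDerivAt (fun x => deriv u (φ x) / 2)
        (deriv (deriv u) (φ r) * deriv φ r / 2) r := (hu''.comp r hφ).div_const 2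
    have hev : (fun x => deriv u (φ x) / 2) =ᶠ[nhds r] deriv (deriv φ) :=
      Filter.eventuallyEq_of_mem (isOpen_Ioo.mem_nhds hr) (fun x hx => (key2' x hx).symm)
    exact hcomp.congr_of_eventuallyEq hev.symm
  intro r hr
  have ht := hmaps hr
  have hupos' := hupos _ ht
  have hd := hdneg r hr
  have hsqd : deriv φ r ^ 2 = u (φ r) := by
    rw [hphi r hr, neg_pow, Real.sq_sqrt hupos'.le]; ring
  have h2 := key2' r hr
  have h3 : deriv (deriv (deriv φ)) r = deriv (deriv u) (φ r) * deriv φ r / 2 :=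
    (key3 r hr).deriv
  have hodet := hode (φ r) ht
  have hmain : 10 * (φ r) ^ 2 * deriv (deriv (deriv φ)) r
        + 2 * φ r * deriv (deriv φ) r * deriv φ r
        - 3 * (deriv φ r) ^ 3
        + 5 * c * (φ r) ^ 2 * deriv φ r
        - 8 * φ r * deriv φ r = 0 := by
    rw [h2, h3]
    linear_combination (deriv φ r / 2 * 2) * hodet - 3 * deriv φ r * hsqd
  refine ⟨key1 r hr, (key2 r hr).differentiableAt, (key3 r hr).differentiableAt,
    hmain, hd, ?_⟩
  have hdne : deriv φ r ≠ 0 := ne_of_lt hd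
  field_simp
  linear_combination hmain
end

section
/- Define β : ℝ → ℝ by β(k) = 2√19·k^((8+√19)/5) - (8+√19)·k^((2√19)/5) + (8-√19), where real powers are the real power function. Then β(1) = 0, β(0) = 8-√19 > 0, and β(k) > 0 for every k with 0 < k < 1. -/
/-- the function
`β k = 2√19 k^((8+√19)/5) - (8+√19) k^((2√19)/5) + (8-√19)` satisfies
`β 1 = 0`, `β 0 = 8 - √19 > 0`, and `β k > 0` for `0 < k < 1`. -/
theorem stmt3 :
    let β : ℝ → ℝ := fun k =>
      2 * Real.sqrt 19 * k ^ ((8 + Real.sqrt 19) / 5)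
        - (8 + Real.sqrt 19) * k ^ (2 * Real.sqrt 19 / 5) + (8 - Real.sqrt 19)
    β 1 = 0 ∧ β 0 = 8 - Real.sqrt 19 ∧ 0 < 8 - Real.sqrt 19 ∧
      ∀ k : ℝ, 0 < k → k < 1 → 0 < β k := by
  intro β
  have s0 : 0 < Real.sqrt 19 := Real.sqrt_pos.2 (by norm_num)
  have s8 : Real.sqrt 19 < 8 := by
    have : Real.sqrt 19 < Real.sqrt 64 := Real.sqrt_lt_sqrt (by norm_num) (by norm_num)
    have h64 : Real.sqrt 64 = 8 := by
      rw [show (64:ℝ) = 8^2 by norm_num, Real.sqrt_sq (by norm_num : (0:ℝ) ≤ 8)]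
    linarith
  have hβ1 : β 1 = 0 := by
    simp only [β, Real.one_rpow]; ring
  refine ⟨hβ1, ?_, by linarith, ?_⟩
  · simp only [β, Real.zero_rpow (by positivity : ((8 + Real.sqrt 19) / 5) ≠ 0),
      Real.zero_rpow (by positivity : (2 * Real.sqrt 19 / 5) ≠ 0)]
    ring
  · intro k hk hk1
    have cont : Continuous β := by
      have c1 : Continuous (fun k : ℝ => k ^ ((8 + Real.sqrt 19) / 5)) :=
        continuous_iff_continuousAt.2 fun x =>
          Real.continuousAt_rpow_const x _ (Or.inr (by positivity))
      have c2 : Continuous (fun k : ℝ => k ^ (2 * Real.sqrt 19 / 5)) :=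
        continuous_iff_continuousAt.2 fun x =>
          Real.continuousAt_rpow_const x _ (Or.inr (by positivity))
      exact ((continuous_const.mul c1).sub (continuous_const.mul c2)).add continuous_const
    have anti : StrictAntiOn β (Set.Icc 0 1) := by
      apply strictAntiOn_of_deriv_neg (convex_Icc 0 1) cont.continuousOn
      intro x hx
      rw [interior_Icc] at hx
      have hx0 : x ≠ 0 := ne_of_gt hx.1
      have d1 : HasDerivAt (fun k : ℝ => k ^ ((8 + Real.sqrt 19) / 5))
          (((8 + Real.sqrt 19) / 5) * x ^ ((8 + Real.sqrt 19) / 5 - 1)) x :=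
        Real.hasDerivAt_rpow_const (Or.inl hx0)
      have d2 : HasDerivAt (fun k : ℝ => k ^ (2 * Real.sqrt 19 / 5))
          ((2 * Real.sqrt 19 / 5) * x ^ (2 * Real.sqrt 19 / 5 - 1)) x :=
        Real.hasDerivAt_rpow_const (Or.inl hx0)
      have dβ : HasDerivAt β
          (2 * Real.sqrt 19 * (((8 + Real.sqrt 19) / 5) * x ^ ((8 + Real.sqrt 19) / 5 - 1))
            - (8 + Real.sqrt 19) * ((2 * Real.sqrt 19 / 5) * x ^ (2 * Real.sqrt 19 / 5 - 1))) x :=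
        ((d1.const_mul (2 * Real.sqrt 19)).sub (d2.const_mul (8 + Real.sqrt 19))).add_const _
      rw [dβ.deriv]
      have hexp : 2 * Real.sqrt 19 / 5 - 1 < (8 + Real.sqrt 19) / 5 - 1 := by linarith
      have hab : x ^ ((8 + Real.sqrt 19) / 5 - 1) < x ^ (2 * Real.sqrt 19 / 5 - 1) :=
        Real.rpow_lt_rpow_of_exponent_gt hx.1 hx.2 hexp
      have hc : 0 < 2 * Real.sqrt 19 * ((8 + Real.sqrt 19) / 5) := by positivity
      nlinarith [mul_lt_mul_of_pos_left hab hc]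
    have h := anti (Set.mem_Icc.2 ⟨hk.le, hk1.le⟩) (Set.mem_Icc.2 ⟨zero_le_one, le_refl 1⟩) hk1
    rw [hβ1] at h
    exact h
end

section
/- Define β : ℝ → ℝ by β(k) = 2√19·k^((8+√19)/5) - (8+√19)·k^((2√19)/5) + (8-√19), where real powers are the real power function. Then for every k with 0 < k < 1, β is differentiable at k with deriv β k = -(2√19(8+√19)/5)·(1 - k^((8-√19)/5))·k^((2√19-5)/5), and in particular deriv β k < 0. -/
/-- for `0 < k < 1`, the function
`β k = 2√19 k^((8+√19)/5) - (8+√19) k^((2√19)/5) + (8-√19)` is differentiable at `k` with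
`β'(k) = -(2√19(8+√19)/5) (1 - k^((8-√19)/5)) k^((2√19-5)/5) < 0`. -/
theorem stmt4 (k : ℝ) (hk0 : 0 < k) (hk1 : k < 1) :
    let β : ℝ → ℝ := fun k =>
      2 * Real.sqrt 19 * k ^ ((8 + Real.sqrt 19) / 5)
        - (8 + Real.sqrt 19) * k ^ (2 * Real.sqrt 19 / 5) + (8 - Real.sqrt 19)
    DifferentiableAt ℝ β k ∧
      deriv β k = -(2 * Real.sqrt 19 * (8 + Real.sqrt 19) / 5)
        * (1 - k ^ ((8 - Real.sqrt 19) / 5)) * k ^ ((2 * Real.sqrt 19 - 5) / 5) ∧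
      deriv β k < 0 := by
  intro β
  have hk0' : k ≠ 0 := hk0.ne'
  have h19 : (0:ℝ) < Real.sqrt 19 := Real.sqrt_pos.mpr (by norm_num)
  have h19lt : Real.sqrt 19 < 5 := by
    have h := Real.sqrt_lt_sqrt (by norm_num : (0:ℝ) ≤ 19) (by norm_num : (19:ℝ) < 25)
    have h25 : Real.sqrt 25 = 5 := by
      rw [show (25:ℝ) = 5^2 by norm_num, Real.sqrt_sq (by norm_num : (0:ℝ) ≤ 5)]
    linarith [h25 ▸ h]
  have hd1 : HasDerivAt (fun x : ℝ => x ^ ((8 + Real.sqrt 19) / 5))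
      (((8 + Real.sqrt 19) / 5) * k ^ ((8 + Real.sqrt 19) / 5 - 1)) k :=
    Real.hasDerivAt_rpow_const (Or.inl hk0')
  have hd2 : HasDerivAt (fun x : ℝ => x ^ (2 * Real.sqrt 19 / 5))
      ((2 * Real.sqrt 19 / 5) * k ^ (2 * Real.sqrt 19 / 5 - 1)) k :=
    Real.hasDerivAt_rpow_const (Or.inl hk0')
  have hβ : HasDerivAt β
      (2 * Real.sqrt 19 * (((8 + Real.sqrt 19) / 5) * k ^ ((8 + Real.sqrt 19) / 5 - 1))
        - (8 + Real.sqrt 19) * ((2 * Real.sqrt 19 / 5) * k ^ (2 * Real.sqrt 19 / 5 - 1))) k := by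
    exact ((hd1.const_mul (2 * Real.sqrt 19)).sub
      (hd2.const_mul (8 + Real.sqrt 19))).add_const (8 - Real.sqrt 19)
  have hadd : k ^ ((8 - Real.sqrt 19) / 5) * k ^ ((2 * Real.sqrt 19 - 5) / 5)
      = k ^ ((8 + Real.sqrt 19) / 5 - 1) := by
    rw [← Real.rpow_add hk0]
    ring_nf
  have hderiv : deriv β k = -(2 * Real.sqrt 19 * (8 + Real.sqrt 19) / 5)
      * (1 - k ^ ((8 - Real.sqrt 19) / 5)) * k ^ ((2 * Real.sqrt 19 - 5) / 5) := by
    rw [hβ.deriv, show 2 * Real.sqrt 19 / 5 - 1 = (2 * Real.sqrt 19 - 5) / 5 by ring]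
    linear_combination (-(2 * Real.sqrt 19 * (8 + Real.sqrt 19) / 5)) * hadd
  refine ⟨hβ.differentiableAt, hderiv, ?_⟩
  rw [hderiv]
  have hC : (0:ℝ) < 2 * Real.sqrt 19 * (8 + Real.sqrt 19) / 5 := by positivity
  have hp : k ^ ((8 - Real.sqrt 19) / 5) < 1 :=
    Real.rpow_lt_one hk0.le hk1 (by linarith)
  have hq : (0:ℝ) < k ^ ((2 * Real.sqrt 19 - 5) / 5) := Real.rpow_pos_of_pos hk0 _
  nlinarith [mul_pos (mul_pos hC (by linarith : (0:ℝ) < 1 - k ^ ((8 - Real.sqrt 19) / 5))) hq]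
end

section
/- Let m > 0 be a real number and define α : ℝ → ℝ by α(k) = 2((8-√19)m - 2(√19+1))·k^(1+(2√19)/5) - 4√19(m-2)·k^((8+√19)/5) + 2((8+√19)m - 2(√19-1))·k^((2√19)/5) - 2((8+√19)m + 2(√19-1))·k + 4√19(m+2)·k^((√19-3)/5) - 2((8-√19)m + 2(√19+1)), where real powers are the real power function. Then α(1) = 0, the first derivative of α at 1 equals 0, the second derivative of α at 1 equals 0, and the third derivative of α at 1 equals -(36√19/25)·m, which is strictly negative. -/
private lemma key (c p : ℝ) {x : ℝ} (hx : 0 < x) :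
    HasDerivAt (fun k : ℝ => c * k ^ p) (c * p * x ^ (p - 1)) x := by
  have h : HasDerivAt (fun y : ℝ => c * y ^ p) (c * (p * x ^ (p - 1))) x := (Real.hasDerivAt_rpow_const (x := x) (p := p) (Or.inl hx.ne')).const_mul c
  convert h using 1
  ring

/-- for `m > 0`, the function `α` below satisfies
`α 1 = 0`, `α' 1 = 0`, `α'' 1 = 0`, `α''' 1 = -(36√19/25) m < 0`
(iterated derivatives in the sense of `iteratedDeriv`). -/
theorem stmt5 (m : ℝ) (hm : 0 < m) :
    let α : ℝ → ℝ := fun k =>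
      2 * ((8 - Real.sqrt 19) * m - 2 * (Real.sqrt 19 + 1)) * k ^ (1 + 2 * Real.sqrt 19 / 5)
        - 4 * Real.sqrt 19 * (m - 2) * k ^ ((8 + Real.sqrt 19) / 5)
        + 2 * ((8 + Real.sqrt 19) * m - 2 * (Real.sqrt 19 - 1)) * k ^ (2 * Real.sqrt 19 / 5)
        - 2 * ((8 + Real.sqrt 19) * m + 2 * (Real.sqrt 19 - 1)) * k
        + 4 * Real.sqrt 19 * (m + 2) * k ^ ((Real.sqrt 19 - 3) / 5)
        - 2 * ((8 - Real.sqrt 19) * m + 2 * (Real.sqrt 19 + 1))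
    α 1 = 0 ∧ iteratedDeriv 1 α 1 = 0 ∧ iteratedDeriv 2 α 1 = 0 ∧
      iteratedDeriv 3 α 1 = -(36 * Real.sqrt 19 / 25) * m ∧
      -(36 * Real.sqrt 19 / 25) * m < 0 := by
  intro α
  have hs : Real.sqrt 19 ^ 2 = 19 := Real.sq_sqrt (by norm_num)
  have hs0 : (0:ℝ) < Real.sqrt 19 := Real.sqrt_pos.mpr (by norm_num)
  have h01 : Set.Ioi (0:ℝ) ∈ nhds (1:ℝ) := Ioi_mem_nhds one_pos
  have hd0 : ∀ x : ℝ, 0 < x → HasDerivAt α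
      (2 * ((8 - Real.sqrt 19) * m - 2 * (Real.sqrt 19 + 1)) * (1 + 2 * Real.sqrt 19 / 5) * x ^ ((1 + 2 * Real.sqrt 19 / 5) - 1) - 4 * Real.sqrt 19 * (m - 2) * ((8 + Real.sqrt 19) / 5) * x ^ (((8 + Real.sqrt 19) / 5) - 1) + 2 * ((8 + Real.sqrt 19) * m - 2 * (Real.sqrt 19 - 1)) * (2 * Real.sqrt 19 / 5) * x ^ ((2 * Real.sqrt 19 / 5) - 1) - 2 * ((8 + Real.sqrt 19) * m + 2 * (Real.sqrt 19 - 1)) * 1 + 4 * Real.sqrt 19 * (m + 2) * ((Real.sqrt 19 - 3) / 5) * x ^ (((Real.sqrt 19 - 3) / 5) - 1)) x := by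
    intro x hx
    exact (((((key (2 * ((8 - Real.sqrt 19) * m - 2 * (Real.sqrt 19 + 1))) (1 + 2 * Real.sqrt 19 / 5) hx).sub (key (4 * Real.sqrt 19 * (m - 2)) ((8 + Real.sqrt 19) / 5) hx)).add (key (2 * ((8 + Real.sqrt 19) * m - 2 * (Real.sqrt 19 - 1))) (2 * Real.sqrt 19 / 5) hx)).sub ((hasDerivAt_id x).const_mul (2 * ((8 + Real.sqrt 19) * m + 2 * (Real.sqrt 19 - 1))))).add (key (4 * Real.sqrt 19 * (m + 2)) ((Real.sqrt 19 - 3) / 5) hx)).sub_const (2 * ((8 - Real.sqrt 19) * m + 2 * (Real.sqrt 19 + 1)))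
  have hd1 : ∀ x : ℝ, 0 < x → HasDerivAt (fun k : ℝ => 2 * ((8 - Real.sqrt 19) * m - 2 * (Real.sqrt 19 + 1)) * (1 + 2 * Real.sqrt 19 / 5) * k ^ ((1 + 2 * Real.sqrt 19 / 5) - 1) - 4 * Real.sqrt 19 * (m - 2) * ((8 + Real.sqrt 19) / 5) * k ^ (((8 + Real.sqrt 19) / 5) - 1) + 2 * ((8 + Real.sqrt 19) * m - 2 * (Real.sqrt 19 - 1)) * (2 * Real.sqrt 19 / 5) * k ^ ((2 * Real.sqrt 19 / 5) - 1) - 2 * ((8 + Real.sqrt 19) * m + 2 * (Real.sqrt 19 - 1)) * 1 + 4 * Real.sqrt 19 * (m + 2) * ((Real.sqrt 19 - 3) / 5) * k ^ (((Real.sqrt 19 - 3) / 5) - 1))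
      (2 * ((8 - Real.sqrt 19) * m - 2 * (Real.sqrt 19 + 1)) * (1 + 2 * Real.sqrt 19 / 5) * ((1 + 2 * Real.sqrt 19 / 5) - 1) * x ^ ((1 + 2 * Real.sqrt 19 / 5) - 1 - 1) - 4 * Real.sqrt 19 * (m - 2) * ((8 + Real.sqrt 19) / 5) * (((8 + Real.sqrt 19) / 5) - 1) * x ^ (((8 + Real.sqrt 19) / 5) - 1 - 1) + 2 * ((8 + Real.sqrt 19) * m - 2 * (Real.sqrt 19 - 1)) * (2 * Real.sqrt 19 / 5) * ((2 * Real.sqrt 19 / 5) - 1) * x ^ ((2 * Real.sqrt 19 / 5) - 1 - 1) + 4 * Real.sqrt 19 * (m + 2) * ((Real.sqrt 19 - 3) / 5) * (((Real.sqrt 19 - 3) / 5) - 1) * x ^ (((Real.sqrt 19 - 3) / 5) - 1 - 1)) x := by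
    intro x hx
    exact (((((key (2 * ((8 - Real.sqrt 19) * m - 2 * (Real.sqrt 19 + 1)) * (1 + 2 * Real.sqrt 19 / 5)) ((1 + 2 * Real.sqrt 19 / 5) - 1) hx).sub (key (4 * Real.sqrt 19 * (m - 2) * ((8 + Real.sqrt 19) / 5)) (((8 + Real.sqrt 19) / 5) - 1) hx)).add (key (2 * ((8 + Real.sqrt 19) * m - 2 * (Real.sqrt 19 - 1)) * (2 * Real.sqrt 19 / 5)) ((2 * Real.sqrt 19 / 5) - 1) hx)).sub_const (2 * ((8 + Real.sqrt 19) * m + 2 * (Real.sqrt 19 - 1)) * 1)).add (key (4 * Real.sqrt 19 * (m + 2) * ((Real.sqrt 19 - 3) / 5)) (((Real.sqrt 19 - 3) / 5) - 1) hx))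
  have hd2 : ∀ x : ℝ, 0 < x → HasDerivAt (fun k : ℝ => 2 * ((8 - Real.sqrt 19) * m - 2 * (Real.sqrt 19 + 1)) * (1 + 2 * Real.sqrt 19 / 5) * ((1 + 2 * Real.sqrt 19 / 5) - 1) * k ^ ((1 + 2 * Real.sqrt 19 / 5) - 1 - 1) - 4 * Real.sqrt 19 * (m - 2) * ((8 + Real.sqrt 19) / 5) * (((8 + Real.sqrt 19) / 5) - 1) * k ^ (((8 + Real.sqrt 19) / 5) - 1 - 1) + 2 * ((8 + Real.sqrt 19) * m - 2 * (Real.sqrt 19 - 1)) * (2 * Real.sqrt 19 / 5) * ((2 * Real.sqrt 19 / 5) - 1) * k ^ ((2 * Real.sqrt 19 / 5) - 1 - 1) + 4 * Real.sqrt 19 * (m + 2) * ((Real.sqrt 19 - 3) / 5) * (((Real.sqrt 19 - 3) / 5) - 1) * k ^ (((Real.sqrt 19 - 3) / 5) - 1 - 1))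
      (2 * ((8 - Real.sqrt 19) * m - 2 * (Real.sqrt 19 + 1)) * (1 + 2 * Real.sqrt 19 / 5) * ((1 + 2 * Real.sqrt 19 / 5) - 1) * ((1 + 2 * Real.sqrt 19 / 5) - 1 - 1) * x ^ ((1 + 2 * Real.sqrt 19 / 5) - 1 - 1 - 1) - 4 * Real.sqrt 19 * (m - 2) * ((8 + Real.sqrt 19) / 5) * (((8 + Real.sqrt 19) / 5) - 1) * (((8 + Real.sqrt 19) / 5) - 1 - 1) * x ^ (((8 + Real.sqrt 19) / 5) - 1 - 1 - 1) + 2 * ((8 + Real.sqrt 19) * m - 2 * (Real.sqrt 19 - 1)) * (2 * Real.sqrt 19 / 5) * ((2 * Real.sqrt 19 / 5) - 1) * ((2 * Real.sqrt 19 / 5) - 1 - 1) * x ^ ((2 * Real.sqrt 19 / 5) - 1 - 1 - 1) + 4 * Real.sqrt 19 * (m + 2) * ((Real.sqrt 19 - 3) / 5) * (((Real.sqrt 19 - 3) / 5) - 1) * (((Real.sqrt 19 - 3) / 5) - 1 - 1) * x ^ (((Real.sqrt 19 - 3) / 5) - 1 - 1 - 1)) x := by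
    intro x hx
    exact ((((key (2 * ((8 - Real.sqrt 19) * m - 2 * (Real.sqrt 19 + 1)) * (1 + 2 * Real.sqrt 19 / 5) * ((1 + 2 * Real.sqrt 19 / 5) - 1)) ((1 + 2 * Real.sqrt 19 / 5) - 1 - 1) hx).sub (key (4 * Real.sqrt 19 * (m - 2) * ((8 + Real.sqrt 19) / 5) * (((8 + Real.sqrt 19) / 5) - 1)) (((8 + Real.sqrt 19) / 5) - 1 - 1) hx)).add (key (2 * ((8 + Real.sqrt 19) * m - 2 * (Real.sqrt 19 - 1)) * (2 * Real.sqrt 19 / 5) * ((2 * Real.sqrt 19 / 5) - 1)) ((2 * Real.sqrt 19 / 5) - 1 - 1) hx)).add (key (4 * Real.sqrt 19 * (m + 2) * ((Real.sqrt 19 - 3) / 5) * (((Real.sqrt 19 - 3) / 5) - 1)) (((Real.sqrt 19 - 3) / 5) - 1 - 1) hx))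
  have e1 : deriv α =ᶠ[nhds (1:ℝ)] (fun k : ℝ => 2 * ((8 - Real.sqrt 19) * m - 2 * (Real.sqrt 19 + 1)) * (1 + 2 * Real.sqrt 19 / 5) * k ^ ((1 + 2 * Real.sqrt 19 / 5) - 1) - 4 * Real.sqrt 19 * (m - 2) * ((8 + Real.sqrt 19) / 5) * k ^ (((8 + Real.sqrt 19) / 5) - 1) + 2 * ((8 + Real.sqrt 19) * m - 2 * (Real.sqrt 19 - 1)) * (2 * Real.sqrt 19 / 5) * k ^ ((2 * Real.sqrt 19 / 5) - 1) - 2 * ((8 + Real.sqrt 19) * m + 2 * (Real.sqrt 19 - 1)) * 1 + 4 * Real.sqrt 19 * (m + 2) * ((Real.sqrt 19 - 3) / 5) * k ^ (((Real.sqrt 19 - 3) / 5) - 1)) := by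
    filter_upwards [h01] with x hx
    exact (hd0 x hx).deriv
  have e2 : deriv (fun k : ℝ => 2 * ((8 - Real.sqrt 19) * m - 2 * (Real.sqrt 19 + 1)) * (1 + 2 * Real.sqrt 19 / 5) * k ^ ((1 + 2 * Real.sqrt 19 / 5) - 1) - 4 * Real.sqrt 19 * (m - 2) * ((8 + Real.sqrt 19) / 5) * k ^ (((8 + Real.sqrt 19) / 5) - 1) + 2 * ((8 + Real.sqrt 19) * m - 2 * (Real.sqrt 19 - 1)) * (2 * Real.sqrt 19 / 5) * k ^ ((2 * Real.sqrt 19 / 5) - 1) - 2 * ((8 + Real.sqrt 19) * m + 2 * (Real.sqrt 19 - 1)) * 1 + 4 * Real.sqrt 19 * (m + 2) * ((Real.sqrt 19 - 3) / 5) * k ^ (((Real.sqrt 19 - 3) / 5) - 1)) =ᶠ[nhds (1:ℝ)] (fun k : ℝ => 2 * ((8 - Real.sqrt 19) * m - 2 * (Real.sqrt 19 + 1)) * (1 + 2 * Real.sqrt 19 / 5) * ((1 + 2 * Real.sqrt 19 / 5) - 1) * k ^ ((1 + 2 * Real.sqrt 19 / 5) - 1 - 1) - 4 * Real.sqrt 19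 * (m - 2) * ((8 + Real.sqrt 19) / 5) * (((8 + Real.sqrt 19) / 5) - 1) * k ^ (((8 + Real.sqrt 19) / 5) - 1 - 1) + 2 * ((8 + Real.sqrt 19) * m - 2 * (Real.sqrt 19 - 1)) * (2 * Real.sqrt 19 / 5) * ((2 * Real.sqrt 19 / 5) - 1) * k ^ ((2 * Real.sqrt 19 / 5) - 1 - 1) + 4 * Real.sqrt 19 * (m + 2) * ((Real.sqrt 19 - 3) / 5) * (((Real.sqrt 19 - 3) / 5) - 1) * k ^ (((Real.sqrt 19 - 3) / 5) - 1 - 1)) := by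
    filter_upwards [h01] with x hx
    exact (hd1 x hx).deriv
  refine ⟨?_, ?_, ?_, ?_, ?_⟩
  · show (2 * ((8 - Real.sqrt 19) * m - 2 * (Real.sqrt 19 + 1)) * (1:ℝ) ^ ((1 + 2 * Real.sqrt 19 / 5)) - 4 * Real.sqrt 19 * (m - 2) * (1:ℝ) ^ (((8 + Real.sqrt 19) / 5)) + 2 * ((8 + Real.sqrt 19) * m - 2 * (Real.sqrt 19 - 1)) * (1:ℝ) ^ ((2 * Real.sqrt 19 / 5)) - 2 * ((8 + Real.sqrt 19) * m + 2 * (Real.sqrt 19 - 1)) * (1:ℝ) + 4 * Real.sqrt 19 * (m + 2) * (1:ℝ) ^ (((Real.sqrt 19 - 3) / 5)) - 2 * ((8 - Real.sqrt 19) * m + 2 * (Real.sqrt 19 + 1))) = 0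
    simp only [Real.one_rpow]
    ring
  · rw [iteratedDeriv_one, (hd0 1 one_pos).deriv]
    simp only [Real.one_rpow]
    ring
  · have h2 : iteratedDeriv 2 α 1 = deriv (deriv α) 1 := by
      rw [show (2:ℕ) = 1 + 1 from rfl, iteratedDeriv_succ, iteratedDeriv_one]
    rw [h2, e1.deriv_eq, (hd1 1 one_pos).deriv]
    simp only [Real.one_rpow]
    linear_combination (-(16/25) * Real.sqrt 19) * hs
  · have h3 : iteratedDeriv 3 α 1 = deriv (deriv (deriv α)) 1 := by
      rw [show (3:ℕ) = 2 + 1 from rfl, iteratedDeriv_succ,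
        show (2:ℕ) = 1 + 1 from rfl, iteratedDeriv_succ, iteratedDeriv_one]
    have ee := (e1.deriv).trans e2
    rw [h3, ee.deriv_eq, (hd2 1 one_pos).deriv]
    simp only [Real.one_rpow]
    linear_combination ((24/25) * Real.sqrt 19 + (4/125) * Real.sqrt 19 * m
      - (48/125) * Real.sqrt 19 ^ 2) * hs
  · nlinarith [mul_pos hs0 hm]
end

section
/- Let m > 0 be a real number and define α : ℝ → ℝ by α(k) = 2((8-√19)m - 2(√19+1))·k^(1+(2√19)/5) - 4√19(m-2)·k^((8+√19)/5) + 2((8+√19)m - 2(√19-1))·k^((2√19)/5) - 2((8+√19)m + 2(√19-1))·k + 4√19(m+2)·k^((√19-3)/5) - 2((8-√19)m + 2(√19+1)), where real powers are the real power function. Then there exists δ ∈ (0,1) such that α(k) > 0 for all k ∈ (1-δ, 1). -/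
noncomputable def G6 (c1 p1 c2 p2 c3 p3 c4 p4 c5 p5 c6 p6 k : ℝ) : ℝ :=
  c1 * k ^ p1 + c2 * k ^ p2 + c3 * k ^ p3 + c4 * k ^ p4 + c5 * k ^ p5 + c6 * k ^ p6

lemma hasDerivAt_G6 {c1 p1 c2 p2 c3 p3 c4 p4 c5 p5 c6 p6 : ℝ} {x : ℝ} (hx : x ≠ 0) :
    HasDerivAt (fun k => G6 c1 p1 c2 p2 c3 p3 c4 p4 c5 p5 c6 p6 k)
      (G6 (c1 * p1) (p1 - 1) (c2 * p2) (p2 - 1) (c3 * p3) (p3 - 1) (c4 * p4) (p4 - 1)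
        (c5 * p5) (p5 - 1) (c6 * p6) (p6 - 1) x) x := by
  have h : ∀ c p : ℝ, HasDerivAt (fun k : ℝ => c * k ^ p) (c * p * x ^ (p - 1)) x := by
    intro c p
    simpa [mul_assoc] using (Real.hasDerivAt_rpow_const (x := x) (p := p) (Or.inl hx)).const_mul c
  simpa [G6] using
    (((((h c1 p1).fun_add (h c2 p2)).fun_add (h c3 p3)).fun_add (h c4 p4)).fun_add (h c5 p5)).fun_add (h c6 p6)

lemma pos_left (g g' : ℝ → ℝ) (a : ℝ) (ha : a < 1)
    (hderiv : ∀ x ∈ Set.Icc a 1, HasDerivAt g (g' x) x)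
    (hneg : ∀ x ∈ Set.Ioo a 1, g' x < 0)
    (h1 : g 1 = 0) : ∀ x ∈ Set.Ico a 1, 0 < g x := by
  intro x hx
  have hanti : StrictAntiOn g (Set.Icc a 1) :=
    strictAntiOn_of_deriv_neg (convex_Icc a 1)
      (fun y hy => (hderiv y hy).continuousAt.continuousWithinAt)
      (by
        intro y hy
        rw [interior_Icc] at hy
        rw [(hderiv y (Set.Ioo_subset_Icc_self hy)).deriv]
        exact hneg y hy)
  have := hanti ⟨hx.1, hx.2.le⟩ (Set.right_mem_Icc.mpr ha.le) hx.2
  rw [h1] at this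
  exact this

lemma neg_left (g g' : ℝ → ℝ) (a : ℝ) (ha : a < 1)
    (hderiv : ∀ x ∈ Set.Icc a 1, HasDerivAt g (g' x) x)
    (hpos : ∀ x ∈ Set.Ioo a 1, 0 < g' x)
    (h1 : g 1 = 0) : ∀ x ∈ Set.Ico a 1, g x < 0 := by
  intro x hx
  have hmono : StrictMonoOn g (Set.Icc a 1) :=
    strictMonoOn_of_deriv_pos (convex_Icc a 1)
      (fun y hy => (hderiv y hy).continuousAt.continuousWithinAt)
      (by
        intro y hy
        rw [interior_Icc] at hy
        rw [(hderiv y (Set.Ioo_subset_Icc_self hy)).deriv]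
        exact hpos y hy)
  have := hmono ⟨hx.1, hx.2.le⟩ (Set.right_mem_Icc.mpr ha.le) hx.2
  rw [h1] at this
  exact this
noncomputable def f0 (m s : ℝ) : ℝ → ℝ := fun k =>
  G6 (2 * ((8 - s) * m - 2 * (s + 1))) (1 + 2 * s / 5) (-(4 * s * (m - 2))) ((8 + s) / 5) (2 * ((8 + s) * m - 2 * (s - 1))) (2 * s / 5) (-(2 * ((8 + s) * m + 2 * (s - 1)))) (1 : ℝ) (4 * s * (m + 2)) ((s - 3) / 5) (-(2 * ((8 - s) * m + 2 * (s + 1)))) (0 : ℝ) k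

noncomputable def f1 (m s : ℝ) : ℝ → ℝ := fun k =>
  G6 ((2 * ((8 - s) * m - 2 * (s + 1))) * (1 + 2 * s / 5)) ((1 + 2 * s / 5) - 1) ((-(4 * s * (m - 2))) * ((8 + s) / 5)) (((8 + s) / 5) - 1) ((2 * ((8 + s) * m - 2 * (s - 1))) * (2 * s / 5)) ((2 * s / 5) - 1) ((-(2 * ((8 + s) * m + 2 * (s - 1)))) * (1 : ℝ)) ((1 : ℝ) - 1) ((4 * s * (m + 2)) * ((s - 3) / 5)) (((s - 3) / 5) - 1) ((-(2 * ((8 - s) * m + 2 * (s + 1)))) * (0 : ℝ)) ((0 : ℝ) - 1) k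

noncomputable def f2 (m s : ℝ) : ℝ → ℝ := fun k =>
  G6 (((2 * ((8 - s) * m - 2 * (s + 1))) * (1 + 2 * s / 5)) * ((1 + 2 * s / 5) - 1)) (((1 + 2 * s / 5) - 1) - 1) (((-(4 * s * (m - 2))) * ((8 + s) / 5)) * (((8 + s) / 5) - 1)) ((((8 + s) / 5) - 1) - 1) (((2 * ((8 + s) * m - 2 * (s - 1))) * (2 * s / 5)) * ((2 * s / 5) - 1)) (((2 * s / 5) - 1) - 1) (((-(2 * ((8 + s) * m + 2 * (s - 1)))) * (1 : ℝ)) * ((1 : ℝ) - 1)) (((1 : ℝ) - 1) - 1) (((4 * s * (m + 2)) * ((s - 3) / 5)) * (((s - 3) / 5) - 1)) ((((s - 3) / 5) - 1) - 1) (((-(2 * ((8 - s) * m + 2 * (s + 1)))) * (0 : ℝ)) * ((0 : ℝ) - 1)) (((0 : ℝ) - 1) - 1) k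

noncomputable def f3 (m s : ℝ) : ℝ → ℝ := fun k =>
  G6 ((((2 * ((8 - s) * m - 2 * (s + 1))) * (1 + 2 * s / 5)) * ((1 + 2 * s / 5) - 1)) * (((1 + 2 * s / 5) - 1) - 1)) ((((1 + 2 * s / 5) - 1) - 1) - 1) ((((-(4 * s * (m - 2))) * ((8 + s) / 5)) * (((8 + s) / 5) - 1)) * ((((8 + s) / 5) - 1) - 1)) (((((8 + s) / 5) - 1) - 1) - 1) ((((2 * ((8 + s) * m - 2 * (s - 1))) * (2 * s / 5)) * ((2 * s / 5) - 1)) * (((2 * s / 5) - 1) - 1)) ((((2 * s / 5) - 1) - 1) - 1) ((((-(2 * ((8 + s) * m + 2 * (s - 1)))) * (1 : ℝ)) * ((1 : ℝ) - 1)) * (((1 : ℝ) - 1) - 1)) ((((1 : ℝ) - 1) - 1) - 1) ((((4 * s * (m + 2)) * ((s - 3) / 5)) * (((s - 3) / 5) - 1)) * ((((s - 3) / 5) - 1) - 1)) (((((s - 3) / 5) - 1) - 1) - 1) ((((-(2 * ((8 - s) * m + 2 * (s + 1)))) * (0 : ℝ)) * ((0 : ℝ) - 1)) * (((0 : ℝ)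 - 1) - 1)) ((((0 : ℝ) - 1) - 1) - 1) k

noncomputable def f4 (m s : ℝ) : ℝ → ℝ := fun k =>
  G6 (((((2 * ((8 - s) * m - 2 * (s + 1))) * (1 + 2 * s / 5)) * ((1 + 2 * s / 5) - 1)) * (((1 + 2 * s / 5) - 1) - 1)) * ((((1 + 2 * s / 5) - 1) - 1) - 1)) (((((1 + 2 * s / 5) - 1) - 1) - 1) - 1) (((((-(4 * s * (m - 2))) * ((8 + s) / 5)) * (((8 + s) / 5) - 1)) * ((((8 + s) / 5) - 1) - 1)) * (((((8 + s) / 5) - 1) - 1) - 1)) ((((((8 + s) / 5) - 1) - 1) - 1) - 1) (((((2 * ((8 + s) * m - 2 * (s - 1))) * (2 * s / 5)) * ((2 * s / 5) - 1)) * (((2 * s / 5) - 1) - 1)) * ((((2 * s / 5) - 1) - 1) - 1)) (((((2 * s / 5) - 1) - 1) - 1) - 1) (((((-(2 * ((8 + s) * m + 2 * (s - 1)))) * (1 : ℝ)) * ((1 : ℝ) - 1)) * (((1 : ℝ) - 1) - 1)) * ((((1 : ℝ) - 1) - 1) - 1)) (((((1 : ℝ) - 1) - 1) - 1) - 1) (((((4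 * s * (m + 2)) * ((s - 3) / 5)) * (((s - 3) / 5) - 1)) * ((((s - 3) / 5) - 1) - 1)) * (((((s - 3) / 5) - 1) - 1) - 1)) ((((((s - 3) / 5) - 1) - 1) - 1) - 1) (((((-(2 * ((8 - s) * m + 2 * (s + 1)))) * (0 : ℝ)) * ((0 : ℝ) - 1)) * (((0 : ℝ) - 1) - 1)) * ((((0 : ℝ) - 1) - 1) - 1)) (((((0 : ℝ) - 1) - 1) - 1) - 1) k

lemma hasDerivAt_f0 (m s : ℝ) {x : ℝ} (hx : x ≠ 0) : HasDerivAt (f0 m s) (f1 m s x) x := by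
  unfold f0 f1; exact hasDerivAt_G6 hx

lemma hasDerivAt_f1 (m s : ℝ) {x : ℝ} (hx : x ≠ 0) : HasDerivAt (f1 m s) (f2 m s x) x := by
  unfold f1 f2; exact hasDerivAt_G6 hx

lemma hasDerivAt_f2 (m s : ℝ) {x : ℝ} (hx : x ≠ 0) : HasDerivAt (f2 m s) (f3 m s x) x := by
  unfold f2 f3; exact hasDerivAt_G6 hx

lemma hasDerivAt_f3 (m s : ℝ) {x : ℝ} (hx : x ≠ 0) : HasDerivAt (f3 m s) (f4 m s x) x := by
  unfold f3 f4; exact hasDerivAt_G6 hx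

lemma eval_f0 (m s : ℝ) : f0 m s 1 = 0 := by
  simp only [f0, G6, Real.one_rpow]; ring

lemma eval_f1 (m s : ℝ) : f1 m s 1 = 0 := by
  simp only [f1, G6, Real.one_rpow]; ring

lemma eval_f2 (m s : ℝ) (hs : s ^ 2 = 19) : f2 m s 1 = 0 := by
  simp only [f2, G6, Real.one_rpow]
  linear_combination (-16 / 25 * s) * hs

lemma eval_f3 (m s : ℝ) (hs : s ^ 2 = 19) : f3 m s 1 = -(36 / 25) * s * m := by
  simp only [f3, G6, Real.one_rpow]
  linear_combination (-48 / 125 * s ^ 2 + 4 / 125 * s * m + 24 / 25 * s) * hs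

/-- for `m > 0`, the function `α` below is strictly positive on some
left neighbourhood `(1-δ, 1)` of `1`, with `δ ∈ (0,1)`. -/
theorem stmt6 (m : ℝ) (hm : 0 < m) :
    let α : ℝ → ℝ := fun k =>
      2 * ((8 - Real.sqrt 19) * m - 2 * (Real.sqrt 19 + 1)) * k ^ (1 + 2 * Real.sqrt 19 / 5)
        - 4 * Real.sqrt 19 * (m - 2) * k ^ ((8 + Real.sqrt 19) / 5)
        + 2 * ((8 + Real.sqrt 19) * m - 2 * (Real.sqrt 19 - 1)) * k ^ (2 * Real.sqrt 19 / 5)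
        - 2 * ((8 + Real.sqrt 19) * m + 2 * (Real.sqrt 19 - 1)) * k
        + 4 * Real.sqrt 19 * (m + 2) * k ^ ((Real.sqrt 19 - 3) / 5)
        - 2 * ((8 - Real.sqrt 19) * m + 2 * (Real.sqrt 19 + 1))
    ∃ δ : ℝ, δ ∈ Set.Ioo (0 : ℝ) 1 ∧ ∀ k ∈ Set.Ioo (1 - δ) 1, 0 < α k := by
  intro α
  set s : ℝ := Real.sqrt 19 with hs_def
  have hs2 : s ^ 2 = 19 := Real.sq_sqrt (by norm_num)
  have hs0 : 0 < s := Real.sqrt_pos.mpr (by norm_num)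
  have hα : ∀ k : ℝ, α k = f0 m s k := by
    intro k
    simp only [α, f0, G6, Real.rpow_one, Real.rpow_zero]
    ring
  -- f3 is negative at 1, hence in a neighbourhood
  have hne : f3 m s 1 < 0 := by
    rw [eval_f3 m s hs2]
    nlinarith [mul_pos hs0 hm]
  have hc : ContinuousAt (f3 m s) 1 := (hasDerivAt_f3 m s one_ne_zero).continuousAt
  have hev : ∀ᶠ x in nhds (1 : ℝ), f3 m s x < 0 :=
    Filter.Tendsto.eventually_lt_const hne hc
  obtain ⟨ε, hε0, hball⟩ := Metric.eventually_nhds_iff.mp hev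
  refine ⟨min ε (1 / 2), ⟨lt_min hε0 (by norm_num), lt_of_le_of_lt (min_le_right _ _) (by norm_num)⟩, ?_⟩
  intro k hk
  have hk1 : k < 1 := hk.2
  have hkpos : (0 : ℝ) < k := by
    have := hk.1
    have h2 : (1 : ℝ) - min ε (1 / 2) ≥ 1 - 1 / 2 := by
      have := min_le_right ε (1 / 2); linarith
    linarith
  have hIccpos : ∀ x ∈ Set.Icc k 1, x ≠ 0 := by
    intro x hx
    have := hx.1
    linarith
  have hf3neg : ∀ x ∈ Set.Ioo k 1, f3 m s x < 0 := by
    intro x hx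
    apply hball
    rw [Real.dist_eq, abs_of_nonpos (by linarith [hx.2] : x - 1 ≤ 0)]
    have hkk : 1 - min ε (1/2) < k := hk.1
    have := min_le_left ε (1/2)
    linarith [hx.1]
  have hf2pos : ∀ x ∈ Set.Ico k 1, 0 < f2 m s x :=
    pos_left (f2 m s) (f3 m s) k hk1
      (fun x hx => hasDerivAt_f2 m s (hIccpos x hx)) hf3neg (eval_f2 m s hs2)
  have hf1neg : ∀ x ∈ Set.Ico k 1, f1 m s x < 0 :=
    neg_left (f1 m s) (f2 m s) k hk1
      (fun x hx => hasDerivAt_f1 m s (hIccpos x hx))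
      (fun x hx => hf2pos x ⟨hx.1.le, hx.2⟩) (eval_f1 m s)
  have hf0pos : ∀ x ∈ Set.Ico k 1, 0 < f0 m s x :=
    pos_left (f0 m s) (f1 m s) k hk1
      (fun x hx => hasDerivAt_f0 m s (hIccpos x hx))
      (fun x hx => hf1neg x ⟨hx.1.le, hx.2⟩) (eval_f0 m s)
  rw [hα k]
  exact hf0pos k ⟨le_refl k, hk1⟩
end

section
/- Let k, m, c be real numbers with 0 < k < 1 and m > 0, and let u : ℝ → ℝ be twice continuously differentiable on the closed interval [k,1] and satisfy 5t²·u''(t) + t·u'(t) - 3·u(t) + 5c·t² - 8t = 0 for all t ∈ [k,1], together with the boundary conditions u(k) = 0, u(1) = 0, u'(k) = 2m, u'(1) = -2m. Then c > 0 and u(t) > 0 for every t with k < t < 1. -/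
open Set Filter Topology

lemma aux_right {f : ℝ → ℝ} {x d : ℝ} (hf : HasDerivAt f d x) (hd : 0 < d) :
    ∀ᶠ t in 𝓝[>] x, f x < f t := by
  have h := hasDerivAt_iff_tendsto_slope.1 hf
  have h2 : ∀ᶠ t in 𝓝[≠] x, 0 < slope f x t := h.eventually (eventually_gt_nhds hd)
  have h3 : ∀ᶠ t in 𝓝[>] x, 0 < slope f x t :=
    h2.filter_mono (nhdsWithin_mono x fun y hy => ne_of_gt hy)
  filter_upwards [h3, self_mem_nhdsWithin] with t ht hxt
  have hx : (0:ℝ) < t - x := sub_pos.2 hxt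
  simp only [slope, vsub_eq_sub, smul_eq_mul] at ht
  have h5 := mul_pos hx ht
  rw [← mul_assoc, mul_inv_cancel₀ (ne_of_gt hx), one_mul] at h5
  linarith

lemma aux_left {f : ℝ → ℝ} {x d : ℝ} (hf : HasDerivAt f d x) (hd : d < 0) :
    ∀ᶠ t in 𝓝[<] x, f x < f t := by
  have h := hasDerivAt_iff_tendsto_slope.1 hf
  have h2 : ∀ᶠ t in 𝓝[≠] x, slope f x t < 0 := h.eventually (eventually_lt_nhds hd)
  have h3 : ∀ᶠ t in 𝓝[<] x, slope f x t < 0 :=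
    h2.filter_mono (nhdsWithin_mono x fun y hy => ne_of_lt hy)
  filter_upwards [h3, self_mem_nhdsWithin] with t ht hxt
  have hx : t - x < 0 := sub_neg.2 hxt
  simp only [slope, vsub_eq_sub, smul_eq_mul] at ht
  have h5 := mul_pos_of_neg_of_neg hx ht
  rw [← mul_assoc, mul_inv_cancel₀ (ne_of_lt hx), one_mul] at h5
  linarith

lemma deriv2_nonpos_of_localmax {u : ℝ → ℝ} {a b t : ℝ} (ht : t ∈ Set.Ioo a b)
    (hu1 : ∀ s ∈ Set.Icc a b, DifferentiableAt ℝ u s)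
    (hu2 : DifferentiableAt ℝ (deriv u) t)
    (hmax : IsLocalMax u t) : deriv (deriv u) t ≤ 0 := by
  by_contra hc
  push_neg at hc
  have hd0 : deriv u t = 0 := hmax.deriv_eq_zero
  have h1 : ∀ᶠ s in 𝓝[>] t, deriv u t < deriv u s := aux_right hu2.hasDerivAt hc
  obtain ⟨b', hb', hsub⟩ := mem_nhdsGT_iff_exists_Ioo_subset.1 h1
  set e := min b' b with he
  have hte : t < e := lt_min hb' ht.2
  have hpos : ∀ s ∈ Set.Ioo t e, 0 < deriv u s := by
    intro s hs
    have := hsub ⟨hs.1, lt_of_lt_of_le hs.2 (min_le_left _ _)⟩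
    rwa [hd0] at this
  have hcont : ContinuousOn u (Set.Icc t e) := by
    intro s hs
    exact (hu1 s ⟨le_trans ht.1.le hs.1, le_trans hs.2 (le_trans (min_le_right _ _) (by linarith [ht.2] : b ≤ b))⟩).continuousAt.continuousWithinAt
  have hmono : StrictMonoOn u (Set.Icc t e) := by
    apply strictMonoOn_of_deriv_pos (convex_Icc t e) hcont
    intro s hs
    rw [interior_Icc] at hs
    exact hpos s hs
  have h2 : ∀ᶠ s in 𝓝[>] t, u t < u s := by
    filter_upwards [Ioo_mem_nhdsGT hte] with s hs
    exact hmono (Set.left_mem_Icc.2 hte.le) ⟨hs.1.le, hs.2.le⟩ hs.1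
  have h3 : ∀ᶠ s in 𝓝[>] t, u s ≤ u t := hmax.filter_mono nhdsWithin_le_nhds
  obtain ⟨s, hs1, hs2⟩ := (h2.and h3).exists
  linarith

lemma deriv2_nonneg_of_localmin {u : ℝ → ℝ} {a b t : ℝ} (ht : t ∈ Set.Ioo a b)
    (hu1 : ∀ s ∈ Set.Icc a b, DifferentiableAt ℝ u s)
    (hu2 : DifferentiableAt ℝ (deriv u) t)
    (hmin : IsLocalMin u t) : 0 ≤ deriv (deriv u) t := by
  by_contra hc
  push_neg at hc
  have hd0 : deriv u t = 0 := hmin.deriv_eq_zero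
  have h1 : ∀ᶠ s in 𝓝[<] t, deriv u t < deriv u s := aux_left hu2.hasDerivAt hc
  obtain ⟨a', ha', hsub⟩ := mem_nhdsLT_iff_exists_Ioo_subset.1 h1
  set e := max a' a with he
  have hte : e < t := max_lt ha' ht.1
  have hpos : ∀ s ∈ Set.Ioo e t, 0 < deriv u s := by
    intro s hs
    have := hsub ⟨lt_of_le_of_lt (le_max_left _ _) hs.1, hs.2⟩
    rwa [hd0] at this
  have hcont : ContinuousOn u (Set.Icc e t) := by
    intro s hs
    exact (hu1 s ⟨le_trans (le_max_right _ _) hs.1, le_trans hs.2 ht.2.le⟩).continuousAt.continuousWithinAt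
  have hmono : StrictMonoOn u (Set.Icc e t) := by
    apply strictMonoOn_of_deriv_pos (convex_Icc e t) hcont
    intro s hs
    rw [interior_Icc] at hs
    exact hpos s hs
  have h2 : ∀ᶠ s in 𝓝[<] t, u s < u t := by
    filter_upwards [Ioo_mem_nhdsLT hte] with s hs
    exact hmono ⟨hs.1.le, hs.2.le⟩ (Set.right_mem_Icc.2 hte.le) hs.2
  have h3 : ∀ᶠ s in 𝓝[<] t, u t ≤ u s := hmin.filter_mono nhdsWithin_le_nhds
  obtain ⟨s, hs1, hs2⟩ := (h2.and h3).exists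
  linarith

/-- sign analysis for the boundary value problem
`5 t² u'' + t u' - 3 u + 5 c t² - 8 t = 0` on `[k,1]`, with
`u(k) = u(1) = 0`, `u'(k) = 2m`, `u'(1) = -2m`, `0 < k < 1`, `m > 0`:
then `c > 0` and `u > 0` on `(k,1)`. -/
theorem stmt8 (k m c : ℝ) (hk0 : 0 < k) (hk1 : k < 1) (hm : 0 < m) (u : ℝ → ℝ)
    (hu1 : ∀ t ∈ Set.Icc k 1, DifferentiableAt ℝ u t)
    (hu2 : ∀ t ∈ Set.Icc k 1, DifferentiableAt ℝ (deriv u) t)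
    (hu3 : ContinuousOn (deriv (deriv u)) (Set.Icc k 1))
    (hode : ∀ t ∈ Set.Icc k 1,
      5 * t ^ 2 * deriv (deriv u) t + t * deriv u t - 3 * u t + 5 * c * t ^ 2 - 8 * t = 0)
    (hbk : u k = 0) (hb1 : u 1 = 0)
    (hdk : deriv u k = 2 * m) (hd1 : deriv u 1 = -(2 * m)) :
    0 < c ∧ ∀ t : ℝ, k < t → t < 1 → 0 < u t := by
  have hcont : ContinuousOn u (Set.Icc k 1) :=
    fun s hs => (hu1 s hs).continuousAt.continuousWithinAt
  have hposk : ∀ᶠ t in 𝓝[>] k, 0 < u t := by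
    have hdpos : (0:ℝ) < deriv u k := by rw [hdk]; linarith
    have h := aux_right (hu1 k ⟨le_refl k, hk1.le⟩).hasDerivAt hdpos
    filter_upwards [h] with t ht
    rwa [hbk] at ht
  -- key lemma at interior local max
  have keyMax : ∀ p, k < p → p < 1 → IsLocalMax u p → 0 < u p → 8/5 < c * p := by
    intro p h1 h2 hmax hup
    have hpmem : p ∈ Set.Icc k 1 := ⟨h1.le, h2.le⟩
    have hd0 : deriv u p = 0 := hmax.deriv_eq_zero
    have hd2 : deriv (deriv u) p ≤ 0 :=
      deriv2_nonpos_of_localmax ⟨h1, h2⟩ hu1 (hu2 p hpmem) hmax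
    have heq := hode p hpmem
    have hp0 : 0 < p := lt_trans hk0 h1
    nlinarith [mul_nonneg (sq_nonneg p) (neg_nonneg.2 hd2)]
  have keyMin : ∀ p, k < p → p < 1 → IsLocalMin u p → u p ≤ 0 → c * p ≤ 8/5 := by
    intro p h1 h2 hmin hup
    have hpmem : p ∈ Set.Icc k 1 := ⟨h1.le, h2.le⟩
    have hd0 : deriv u p = 0 := hmin.deriv_eq_zero
    have hd2 : 0 ≤ deriv (deriv u) p :=
      deriv2_nonneg_of_localmin ⟨h1, h2⟩ hu1 (hu2 p hpmem) hmin
    have heq := hode p hpmem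
    have hp0 : 0 < p := lt_trans hk0 h1
    nlinarith [mul_nonneg (sq_nonneg p) hd2]
  -- c > 0
  have hc : 0 < c := by
    obtain ⟨x, hxu, hxmem⟩ :=
      (hposk.and (eventually_of_mem (Ioo_mem_nhdsGT_of_mem ⟨le_refl k, hk1⟩) (fun y hy => hy))).exists
    obtain ⟨p, hpmem, hpmax⟩ := isCompact_Icc.exists_isMaxOn (Set.nonempty_Icc.2 hk1.le) hcont
    have hxIcc : x ∈ Set.Icc k 1 := ⟨hxmem.1.le, hxmem.2.le⟩
    have hup : 0 < u p := lt_of_lt_of_le hxu (isMaxOn_iff.1 hpmax x hxIcc)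
    have hpk : k < p := lt_of_le_of_ne hpmem.1 (fun h => by rw [← h, hbk] at hup; linarith)
    have hp1 : p < 1 := lt_of_le_of_ne hpmem.2 (fun h => by rw [h, hb1] at hup; linarith)
    have hlmax : IsLocalMax u p := hpmax.isLocalMax (Icc_mem_nhds hpk hp1)
    have hcp := keyMax p hpk hp1 hlmax hup
    nlinarith [lt_trans hk0 hpk]
  refine ⟨hc, ?_⟩
  intro t htk ht1
  by_contra hut
  push_neg at hut
  -- positive point in (k, t)
  obtain ⟨x, hxu, hxmem⟩ :=
    (hposk.and (eventually_of_mem (Ioo_mem_nhdsGT_of_mem ⟨le_refl k, htk⟩) (fun y hy => hy))).exists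
  -- max over [k, t]
  obtain ⟨p, hpmem, hpmax⟩ := isCompact_Icc.exists_isMaxOn (Set.nonempty_Icc.2 htk.le)
    (hcont.mono (Set.Icc_subset_Icc (le_refl k) ht1.le))
  have hxIcc : x ∈ Set.Icc k t := ⟨hxmem.1.le, hxmem.2.le⟩
  have hup : 0 < u p := lt_of_lt_of_le hxu (isMaxOn_iff.1 hpmax x hxIcc)
  have hpk : k < p := lt_of_le_of_ne hpmem.1 (fun h => by rw [← h, hbk] at hup; linarith)
  have hpt : p < t := lt_of_le_of_ne hpmem.2 (fun h => by rw [h] at hup; linarith)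
  have hp1 : p < 1 := lt_trans hpt ht1
  have hlmax : IsLocalMax u p := hpmax.isLocalMax (Icc_mem_nhds hpk hpt)
  have hcp := keyMax p hpk hp1 hlmax hup
  -- min over [p, 1]
  obtain ⟨q, hqmem, hqmin⟩ := isCompact_Icc.exists_isMinOn (Set.nonempty_Icc.2 hp1.le)
    (hcont.mono (Set.Icc_subset_Icc hpk.le (le_refl 1)))
  have htIcc : t ∈ Set.Icc p 1 := ⟨hpt.le, ht1.le⟩
  have huq : u q ≤ 0 := le_trans (isMinOn_iff.1 hqmin t htIcc) hut
  by_cases hq0 : u q < 0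
  · have hqp : p < q := lt_of_le_of_ne hqmem.1 (fun h => by rw [← h] at hq0; linarith)
    have hq1 : q < 1 := lt_of_le_of_ne hqmem.2 (fun h => by rw [h, hb1] at hq0; linarith)
    have hlmin : IsLocalMin u q := hqmin.isLocalMin (Icc_mem_nhds hqp hq1)
    have hcq := keyMin q (lt_trans hpk hqp) hq1 hlmin huq
    nlinarith [mul_lt_mul_of_pos_left hqp hc]
  · push_neg at hq0
    have huq0 : u q = 0 := le_antisymm huq hq0
    have hut0 : u t = 0 := le_antisymm hut (by rw [← huq0]; exact isMinOn_iff.1 hqmin t htIcc)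
    have htmin : IsMinOn u (Set.Icc p 1) t := by
      intro s hs
      rw [hut0, ← huq0]
      exact isMinOn_iff.1 hqmin s hs
    have hlmin : IsLocalMin u t := htmin.isLocalMin (Icc_mem_nhds hpt ht1)
    have hct := keyMin t (lt_trans hpk hpt) ht1 hlmin hut
    nlinarith [mul_lt_mul_of_pos_left hpt hc]
end

section
/- Let k < 1 be a real number and let u : ℝ → ℝ be continuous on the closed interval [k,1], strictly positive on the open interval (k,1), with u(k) = 0 and u(1) = 0, differentiable at k with deriv u k > 0 and differentiable at 1 with deriv u 1 < 0. Then the function t ↦ 1/√(u(t)) is integrable on the open interval (k,1) with respect to Lebesgue measure; in particular the integral ∫_{k}^{1} dt/√(u(t)) is finite. -/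
open MeasureTheory Set Filter

/-- Auxiliary: a linear lower bound `c*(t-k) < u t` on `(k,a)` gives integrability of
`1/√(u t)` there. -/
lemma aux_left_s9 (k a c : ℝ) (hc : 0 < c) (hka : k < a) (u : ℝ → ℝ)
    (hm : AEStronglyMeasurable (fun t => 1 / Real.sqrt (u t)) (volume.restrict (Set.Ioo k a)))
    (hb : ∀ t ∈ Set.Ioo k a, c * (t - k) < u t) :
    IntegrableOn (fun t => 1 / Real.sqrt (u t)) (Set.Ioo k a) volume := by
  have hrpow : IntervalIntegrable (fun x : ℝ => x ^ (-(1/2) : ℝ)) volume 0 (a - k) :=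
    intervalIntegral.intervalIntegrable_rpow' (by norm_num)
  have h1 : IntervalIntegrable (fun x : ℝ => (x - k) ^ (-(1/2) : ℝ)) volume k a := by
    simpa using hrpow.comp_sub_right k
  have h2 : IntegrableOn (fun x : ℝ => (x - k) ^ (-(1/2) : ℝ)) (Set.Ioo k a) volume := by
    rw [intervalIntegrable_iff_integrableOn_Ioc_of_le hka.le] at h1
    exact h1.mono_set Set.Ioo_subset_Ioc_self
  have hg : IntegrableOn
      (fun x : ℝ => (Real.sqrt c)⁻¹ * (x - k) ^ (-(1/2) : ℝ)) (Set.Ioo k a) volume :=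
    h2.const_mul _
  refine hg.mono' hm ?_
  filter_upwards [ae_restrict_mem measurableSet_Ioo] with t ht
  have htk : 0 < t - k := sub_pos.2 ht.1
  have hlb : c * (t - k) < u t := hb t ht
  have hub : 0 < u t := lt_trans (mul_pos hc htk) hlb
  have hsq : Real.sqrt (c * (t - k)) ≤ Real.sqrt (u t) := Real.sqrt_le_sqrt hlb.le
  have hsqpos : 0 < Real.sqrt (c * (t - k)) := Real.sqrt_pos.2 (mul_pos hc htk)
  rw [Real.norm_eq_abs, abs_of_nonneg (by positivity)]
  have : (1 : ℝ) / Real.sqrt (u t) ≤ 1 / Real.sqrt (c * (t - k)) :=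
    one_div_le_one_div_of_le hsqpos hsq
  refine this.trans (le_of_eq ?_)
  rw [Real.sqrt_mul hc.le, one_div, mul_inv, Real.sqrt_eq_rpow (t - k),
    ← Real.rpow_neg htk.le]

/-- Auxiliary: a linear lower bound `c*(a-t) < u t` on `(b,a)` gives integrability of
`1/√(u t)` there. -/
lemma aux_right_s9 (b a c : ℝ) (hc : 0 < c) (hba : b < a) (u : ℝ → ℝ)
    (hm : AEStronglyMeasurable (fun t => 1 / Real.sqrt (u t)) (volume.restrict (Set.Ioo b a)))
    (hb' : ∀ t ∈ Set.Ioo b a, c * (a - t) < u t) :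
    IntegrableOn (fun t => 1 / Real.sqrt (u t)) (Set.Ioo b a) volume := by
  have hrpow : IntervalIntegrable (fun x : ℝ => x ^ (-(1/2) : ℝ)) volume 0 (a - b) :=
    intervalIntegral.intervalIntegrable_rpow' (by norm_num)
  have h1 : IntervalIntegrable (fun x : ℝ => (a - x) ^ (-(1/2) : ℝ)) volume b a := by
    simpa using (hrpow.comp_sub_left a).symm
  have h2 : IntegrableOn (fun x : ℝ => (a - x) ^ (-(1/2) : ℝ)) (Set.Ioo b a) volume := by
    rw [intervalIntegrable_iff_integrableOn_Ioc_of_le hba.le] at h1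
    exact h1.mono_set Set.Ioo_subset_Ioc_self
  have hg : IntegrableOn
      (fun x : ℝ => (Real.sqrt c)⁻¹ * (a - x) ^ (-(1/2) : ℝ)) (Set.Ioo b a) volume :=
    h2.const_mul _
  refine hg.mono' hm ?_
  filter_upwards [ae_restrict_mem measurableSet_Ioo] with t ht
  have htk : 0 < a - t := sub_pos.2 ht.2
  have hlb : c * (a - t) < u t := hb' t ht
  have hub : 0 < u t := lt_trans (mul_pos hc htk) hlb
  have hsq : Real.sqrt (c * (a - t)) ≤ Real.sqrt (u t) := Real.sqrt_le_sqrt hlb.le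
  have hsqpos : 0 < Real.sqrt (c * (a - t)) := Real.sqrt_pos.2 (mul_pos hc htk)
  rw [Real.norm_eq_abs, abs_of_nonneg (by positivity)]
  have : (1 : ℝ) / Real.sqrt (u t) ≤ 1 / Real.sqrt (c * (a - t)) :=
    one_div_le_one_div_of_le hsqpos hsq
  refine this.trans (le_of_eq ?_)
  rw [Real.sqrt_mul hc.le, one_div, mul_inv, Real.sqrt_eq_rpow (a - t),
    ← Real.rpow_neg htk.le]

/-- if `u` is continuous on `[k,1]`, strictly positive on `(k,1)`,
vanishes at both endpoints, and vanishes to first order there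
(`u'(k) > 0`, `u'(1) < 0`), then `t ↦ 1/√(u t)` is Lebesgue-integrable on `(k,1)`. -/
theorem stmt9 (k : ℝ) (hk : k < 1) (u : ℝ → ℝ)
    (hcont : ContinuousOn u (Set.Icc k 1))
    (hpos : ∀ t ∈ Set.Ioo k 1, 0 < u t)
    (hbk : u k = 0) (hb1 : u 1 = 0)
    (hdk : DifferentiableAt ℝ u k) (hdk' : 0 < deriv u k)
    (hd1 : DifferentiableAt ℝ u 1) (hd1' : deriv u 1 < 0) :
    IntegrableOn (fun t => 1 / Real.sqrt (u t)) (Set.Ioo k 1) volume := by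
  have hfc : ContinuousOn (fun t => 1 / Real.sqrt (u t)) (Set.Ioo k 1) := by
    apply ContinuousOn.div continuousOn_const
    · exact Real.continuous_sqrt.comp_continuousOn (hcont.mono Set.Ioo_subset_Icc_self)
    · intro t ht
      exact Real.sqrt_ne_zero'.mpr (hpos t ht)
  -- near k : get a > k with u t > (deriv u k / 2) * (t - k) on (k, a)
  have hsk : Tendsto (slope u k) (nhdsWithin k {k}ᶜ) (nhds (deriv u k)) :=
    hasDerivAt_iff_tendsto_slope.1 hdk.hasDerivAt
  have hmemk : {t | deriv u k / 2 < slope u k t} ∈ nhdsWithin k (Set.Ioi k) := by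
    apply nhdsWithin_mono k (fun t (ht : t ∈ Set.Ioi k) => (ne_of_gt ht : t ≠ k))
    exact hsk.eventually (eventually_gt_nhds (half_lt_self hdk'))
  obtain ⟨a, hak, haS⟩ := mem_nhdsGT_iff_exists_Ioo_subset.1 hmemk
  have hlbk : ∀ t ∈ Set.Ioo k a, deriv u k / 2 * (t - k) < u t := by
    intro t ht
    have hs := haS ht
    rw [Set.mem_setOf_eq, slope_def_field, hbk, sub_zero] at hs
    exact (lt_div_iff₀ (sub_pos.2 ht.1)).1 hs
  -- near 1 : get b < 1 with u t > (-(deriv u 1) / 2) * (1 - t) on (b, 1)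
  have hs1 : Tendsto (slope u 1) (nhdsWithin 1 {(1:ℝ)}ᶜ) (nhds (deriv u 1)) :=
    hasDerivAt_iff_tendsto_slope.1 hd1.hasDerivAt
  have hmem1 : {t | slope u 1 t < deriv u 1 / 2} ∈ nhdsWithin (1:ℝ) (Set.Iio 1) := by
    apply nhdsWithin_mono (1:ℝ) (fun t (ht : t ∈ Set.Iio 1) => (ne_of_lt ht : t ≠ 1))
    exact hs1.eventually (eventually_lt_nhds (by linarith))
  obtain ⟨b, hb1', hbS⟩ := mem_nhdsLT_iff_exists_Ioo_subset.1 hmem1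
  have hlb1 : ∀ t ∈ Set.Ioo b 1, -(deriv u 1) / 2 * (1 - t) < u t := by
    intro t ht
    have hs := hbS ht
    rw [Set.mem_setOf_eq, slope_def_field, hb1, sub_zero] at hs
    have ht1 : t - 1 < 0 := sub_neg.2 ht.2
    have := (div_lt_iff_of_neg ht1).1 hs
    nlinarith
  -- split points
  set m : ℝ := (k + 1) / 2 with hm
  have hkm : k < m := by simp only [hm]; linarith
  have hm1 : m < 1 := by simp only [hm]; linarith
  set A : ℝ := min a m with hA
  set B : ℝ := max b m with hB
  have hkA : k < A := lt_min hak hkm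
  have hB1 : B < 1 := max_lt hb1' hm1
  have hAB : A ≤ B := (min_le_right a m).trans (le_max_right b m)
  have hA1 : A < 1 := lt_of_le_of_lt (min_le_right a m) hm1
  have hkB : k < B := lt_of_lt_of_le hkA hAB
  -- three pieces
  have p1 : IntegrableOn (fun t => 1 / Real.sqrt (u t)) (Set.Ioo k A) volume := by
    refine aux_left_s9 k A (deriv u k / 2) (half_pos hdk') hkA u ?_ ?_
    · exact (hfc.mono (Set.Ioo_subset_Ioo le_rfl hA1.le)).aestronglyMeasurable
        measurableSet_Ioo
    · exact fun t ht => hlbk t (Set.Ioo_subset_Ioo le_rfl (min_le_left a m) ht)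
  have p3 : IntegrableOn (fun t => 1 / Real.sqrt (u t)) (Set.Ioo B 1) volume := by
    refine aux_right_s9 B 1 (-(deriv u 1) / 2) (by linarith) hB1 u ?_ ?_
    · exact (hfc.mono (Set.Ioo_subset_Ioo hkB.le le_rfl)).aestronglyMeasurable
        measurableSet_Ioo
    · exact fun t ht => hlb1 t (Set.Ioo_subset_Ioo (le_max_left b m) le_rfl ht)
  have p2 : IntegrableOn (fun t => 1 / Real.sqrt (u t)) (Set.Icc A B) volume := by
    exact (hfc.mono (Set.Icc_subset_Ioo hkA hB1)).integrableOn_compact isCompact_Icc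
  have hsub : Set.Ioo k 1 ⊆ (Set.Ioo k A ∪ Set.Icc A B) ∪ Set.Ioo B 1 := by
    intro t ht
    by_cases h1 : t < A
    · exact Or.inl (Or.inl ⟨ht.1, h1⟩)
    by_cases h2 : t ≤ B
    · exact Or.inl (Or.inr ⟨not_lt.1 h1, h2⟩)
    · exact Or.inr ⟨not_le.1 h2, ht.2⟩
  exact ((p1.union p2).union p3).mono_set hsub
end

section
/- For every natural number n ≥ 3, one has 2·π·n·C(2n,n)/4^n ≤ (15π/8)^(n/3), where C(2n,n) is the central binomial coefficient (Nat.choose (2n) n, regarded as a real number) and the right-hand side is the real power (15π/8)^(n/3); equality holds when n = 3. -/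
/-- for `n ≥ 3`, one has `2 π n C(2n,n) / 4^n ≤ (15π/8)^(n/3)`,
with equality when `n = 3`. -/
theorem stmt13 (n : ℕ) (hn : 3 ≤ n) :
    2 * Real.pi * (n : ℝ) * (Nat.choose (2 * n) n : ℝ) / 4 ^ n
      ≤ (15 * Real.pi / 8) ^ ((n : ℝ) / 3) ∧
    2 * Real.pi * (3 : ℝ) * (Nat.choose 6 3 : ℝ) / 4 ^ 3
      = (15 * Real.pi / 8) ^ ((3 : ℝ) / 3) := by
  have hπ : (0:ℝ) < Real.pi := Real.pi_pos
  have hπ3 : (3:ℝ) ≤ Real.pi := by linarith [Real.pi_gt_three]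
  have hR : (0:ℝ) < 15 * Real.pi / 8 := by positivity
  have heq : 2 * Real.pi * (3 : ℝ) * (Nat.choose 6 3 : ℝ) / 4 ^ 3
      = (15 * Real.pi / 8) ^ ((3 : ℝ) / 3) := by
    rw [show ((3:ℝ)/3 : ℝ) = 1 by norm_num, Real.rpow_one,
      show Nat.choose 6 3 = 20 from by decide]
    norm_num
    ring
  refine ⟨?_, heq⟩
  -- key: (7/6) ≤ R^(1/3)
  have h76 : (7/6 : ℝ) ≤ (15 * Real.pi / 8) ^ ((1:ℝ)/3) := by
    have h1 : ((343/216 : ℝ)) ^ ((1:ℝ)/3) ≤ (15 * Real.pi / 8) ^ ((1:ℝ)/3) :=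
      Real.rpow_le_rpow (by norm_num) (by linarith) (by norm_num)
    have h2 : ((343/216 : ℝ)) ^ ((1:ℝ)/3) = 7/6 := by
      rw [show (343/216 : ℝ) = (7/6 : ℝ) ^ (3:ℕ) by norm_num,
        ← Real.rpow_natCast (7/6 : ℝ) 3, ← Real.rpow_mul (by norm_num)]
      norm_num
    linarith
  induction n, hn using Nat.le_induction with
  | base =>
    have : 2 * Real.pi * ((3:ℕ) : ℝ) * (Nat.choose (2*3) 3 : ℝ) / 4 ^ 3
        = 2 * Real.pi * (3 : ℝ) * (Nat.choose 6 3 : ℝ) / 4 ^ 3 := by norm_num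
    rw [this, heq]
    norm_num
  | succ n hn ih =>
    have key : ((n:ℝ)+1) * (Nat.choose (2*(n+1)) (n+1) : ℝ)
        = 2*(2*(n:ℝ)+1) * (Nat.choose (2*n) n : ℝ) := by
      have := Nat.succ_mul_centralBinom_succ n
      simp only [Nat.centralBinom] at this
      exact_mod_cast this
    have hn0 : (0:ℝ) < (n:ℝ) := by
      have : (3:ℝ) ≤ (n:ℝ) := by exact_mod_cast hn
      linarith
    have hstep : 2 * Real.pi * ((n:ℝ)+1) * (Nat.choose (2*(n+1)) (n+1) : ℝ) / 4 ^ (n+1)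
        = (2 * Real.pi * (n:ℝ) * (Nat.choose (2*n) n : ℝ) / 4 ^ n)
          * ((2*(n:ℝ)+1)/(2*(n:ℝ))) := by
      rw [pow_succ]
      have h4 : (4:ℝ)^n ≠ 0 := by positivity
      field_simp
      linear_combination 2 * key
    have hq : (2*(n:ℝ)+1)/(2*(n:ℝ)) ≤ 7/6 := by
      have hn3 : (3:ℝ) ≤ (n:ℝ) := by exact_mod_cast hn
      rw [div_le_div_iff₀ (by linarith) (by norm_num)]
      nlinarith
    have hq0 : (0:ℝ) ≤ (2*(n:ℝ)+1)/(2*(n:ℝ)) := by positivity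
    have ha0 : (0:ℝ) ≤ 2 * Real.pi * (n:ℝ) * (Nat.choose (2*n) n : ℝ) / 4 ^ n := by
      positivity
    have hRn : (15 * Real.pi / 8) ^ (((n:ℝ)+1) / 3)
        = (15 * Real.pi / 8) ^ ((n:ℝ)/3) * (15 * Real.pi / 8) ^ ((1:ℝ)/3) := by
      rw [← Real.rpow_add hR]
      ring_nf
    have hcast : (((n+1:ℕ)):ℝ) = (n:ℝ)+1 := by push_cast; ring
    rw [hcast, hstep, hRn]
    have hRn0 : (0:ℝ) ≤ (15 * Real.pi / 8) ^ ((n:ℝ)/3) := by positivity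
    calc (2 * Real.pi * (n:ℝ) * (Nat.choose (2*n) n : ℝ) / 4 ^ n) * ((2*(n:ℝ)+1)/(2*(n:ℝ)))
        ≤ (15 * Real.pi / 8) ^ ((n:ℝ)/3) * ((15 * Real.pi / 8) ^ ((1:ℝ)/3)) := by
          apply mul_le_mul ih (le_trans hq h76) hq0 hRn0
end

section
/- Let m > 0 and 0 < k < 1 be real numbers. Define β(k) = 2√19·k^((8+√19)/5) - (8+√19)·k^((2√19)/5) + (8-√19) (which is strictly positive for 0 < k < 1), a(k) = ((10m + 4(√19-3))·k^((8+√19)/5) - 10(m+2)·k^((2√19)/5) + 4(8-√19)·k^((3+√19)/5)) / β(k), b(k) = (-(8+√19)·a(k) + 10(m+2))/(8-√19), and c(k) = (9/50)·(-(√19-2)·a(k) + (√19+2)·b(k) + 10(m-2)). Then the function u_k(t) = a(k)·t^((2-√19)/5) - 4t + b(k)·t^((2+√19)/5) - (5·c(k)/9)·t², defined for t > 0, satisfies u_k(1) = 0, u_k(k) = 0, and deriv u_k 1 = -2m. -/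
/-- with the explicit coefficients `a(k)`, `b(k)`, `c(k)` below, the function
`u_k t = a(k) t^((2-√19)/5) - 4 t + b(k) t^((2+√19)/5) - (5 c(k)/9) t²`
satisfies `u_k 1 = 0`, `u_k k = 0`, and `u_k' 1 = -2m`. -/
theorem stmt14 (m k : ℝ) (hm : 0 < m) (hk0 : 0 < k) (hk1 : k < 1) :
    let β : ℝ := 2 * Real.sqrt 19 * k ^ ((8 + Real.sqrt 19) / 5)
      - (8 + Real.sqrt 19) * k ^ (2 * Real.sqrt 19 / 5) + (8 - Real.sqrt 19)
    let a : ℝ := ((10 * m + 4 * (Real.sqrt 19 - 3)) * k ^ ((8 + Real.sqrt 19) / 5)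
      - 10 * (m + 2) * k ^ (2 * Real.sqrt 19 / 5)
      + 4 * (8 - Real.sqrt 19) * k ^ ((3 + Real.sqrt 19) / 5)) / β
    let b : ℝ := (-(8 + Real.sqrt 19) * a + 10 * (m + 2)) / (8 - Real.sqrt 19)
    let c : ℝ := (9 / 50) * (-(Real.sqrt 19 - 2) * a + (Real.sqrt 19 + 2) * b + 10 * (m - 2))
    let u : ℝ → ℝ := fun t =>
      a * t ^ ((2 - Real.sqrt 19) / 5) - 4 * t + b * t ^ ((2 + Real.sqrt 19) / 5)
        - (5 * c / 9) * t ^ 2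
    0 < β ∧ u 1 = 0 ∧ u k = 0 ∧ deriv u 1 = -(2 * m) := by
  intro β a b c u
  set s : ℝ := Real.sqrt 19 with hsdef
  have hs2 : s ^ 2 = 19 := Real.sq_sqrt (by norm_num)
  have hs0 : 0 ≤ s := Real.sqrt_nonneg 19
  have hs4 : 4 < s := by nlinarith
  have hs5 : s < 5 := by nlinarith
  -- β > 0 via strict Bernoulli
  have hQ2pos : (0:ℝ) < k ^ (2 * s / 5) := Real.rpow_pos_of_pos hk0 _
  have hQ2lt : k ^ (2 * s / 5) < 1 :=
    Real.rpow_lt_one hk0.le hk1 (by positivity)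
  have hβpos : 0 < β := by
    have hp1 : 1 < (8 + s) / (2 * s) := by
      rw [lt_div_iff₀ (by positivity)]; nlinarith
    have hrw : k ^ ((8 + s) / 5) = (k ^ (2 * s / 5)) ^ ((8 + s) / (2 * s)) := by
      rw [← Real.rpow_mul hk0.le]
      congr 1
      field_simp
    have hber := one_add_mul_self_lt_rpow_one_add
      (s := k ^ (2 * s / 5) - 1) (by nlinarith) (by nlinarith) hp1
    rw [add_sub_cancel] at hber
    have h2s : (0:ℝ) < 2 * s := by nlinarith
    have hber' : 2 * s + (8 + s) * (k ^ (2 * s / 5) - 1)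
        < 2 * s * ((k ^ (2 * s / 5)) ^ ((8 + s) / (2 * s))) := by
      calc 2 * s + (8 + s) * (k ^ (2 * s / 5) - 1)
          = 2 * s * (1 + (8 + s) / (2 * s) * (k ^ (2 * s / 5) - 1)) := by
            field_simp
        _ < _ := (mul_lt_mul_iff_right₀ h2s).mpr hber
    show 0 < 2 * s * k ^ ((8 + s) / 5) - (8 + s) * k ^ (2 * s / 5) + (8 - s)
    rw [hrw]
    linarith
  refine ⟨hβpos, ?_, ?_, ?_⟩
  all_goals
    have h8s : (8:ℝ) - s ≠ 0 := by nlinarith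
    have hb2 : b * (8 - s) = -(8 + s) * a + 10 * (m + 2) := div_mul_cancel₀ _ h8s
    have hc3 : 50 * c = 9 * (-(s - 2) * a + (s + 2) * b + 10 * (m - 2)) := by
      show 50 * ((9 / 50) * _) = _; ring
  -- u 1 = 0
  · show a * (1:ℝ) ^ ((2 - s) / 5) - 4 * 1 + b * (1:ℝ) ^ ((2 + s) / 5) - 5 * c / 9 * 1 ^ 2 = 0
    rw [Real.one_rpow, Real.one_rpow]
    linear_combination (1/10) * hb2 - (1/90) * hc3
  -- u k = 0
  · have ha1 : a * β = (10 * m + 4 * (s - 3)) * k ^ ((8 + s) / 5)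
        - 10 * (m + 2) * k ^ (2 * s / 5) + 4 * (8 - s) * k ^ ((3 + s) / 5) :=
      div_mul_cancel₀ _ hβpos.ne'
    set P : ℝ := k ^ ((1:ℝ) / 5) with hPdef
    set Q : ℝ := k ^ (s / 5) with hQdef
    set A : ℝ := k ^ ((2 - s) / 5) with hAdef
    have hP : 0 < P := Real.rpow_pos_of_pos hk0 _
    have hQ : 0 < Q := Real.rpow_pos_of_pos hk0 _
    have hPn : ∀ n : ℕ, P ^ n = k ^ ((n : ℝ) / 5) := by
      intro n
      rw [hPdef, ← Real.rpow_natCast (k ^ ((1:ℝ)/5)) n, ← Real.rpow_mul hk0.le]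
      congr 1; ring
    have hQ2 : Q ^ 2 = k ^ (2 * s / 5) := by
      rw [hQdef, ← Real.rpow_natCast (k ^ (s/5)) 2, ← Real.rpow_mul hk0.le]
      congr 1; push_cast; ring
    have hmulPQ : ∀ n : ℕ, P ^ n * Q = k ^ (((n : ℝ) + s) / 5) := by
      intro n
      rw [hPn, hQdef, ← Real.rpow_add hk0]
      congr 1; ring
    have hA : A * Q = P ^ 2 := by
      rw [hAdef, hQdef, ← Real.rpow_add hk0, hPn]
      congr 1; push_cast; ring
    have e2 : k ^ ((2 + s) / 5) = P ^ 2 * Q := by rw [hmulPQ]; norm_num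
    have e3 : k ^ ((8 + s) / 5) = P ^ 8 * Q := by rw [hmulPQ]; norm_num
    have e5 : k ^ ((3 + s) / 5) = P ^ 3 * Q := by rw [hmulPQ]; norm_num
    have e6 : k = P ^ 5 := by rw [hPn]; norm_num
    rw [e3, ← hQ2, e5] at ha1
    have hβ' : β = 2 * s * (P ^ 8 * Q) - (8 + s) * Q ^ 2 + (8 - s) := by
      show 2 * s * k ^ ((8 + s) / 5) - (8 + s) * k ^ (2 * s / 5) + (8 - s) = _
      rw [e3, hQ2]
    rw [hβ'] at ha1
    show a * A - 4 * k + b * k ^ ((2 + s) / 5) - 5 * c / 9 * k ^ 2 = 0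
    rw [e2, e6]
    have h10 : (10 * (8 - s) * Q) ≠ 0 := by
      apply mul_ne_zero (mul_ne_zero (by norm_num) h8s) hQ.ne'
    have key : (10 * (8 - s) * Q) *
        (a * A - 4 * P ^ 5 + b * (P ^ 2 * Q) - 5 * c / 9 * (P ^ 5) ^ 2) = 0 := by
      linear_combination (10 * P ^ 2) * ha1
        + (10 * P ^ 2 * Q ^ 2 - (s + 2) * P ^ 10 * Q) * hb2
        - ((8 - s) * P ^ 10 * Q / 9) * hc3
        + (10 * (8 - s) * a) * hA
    exact (mul_eq_zero.mp key).resolve_left h10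
  -- deriv
  · have hd1 : HasDerivAt (fun t : ℝ => t ^ ((2 - s) / 5))
        (((2 - s) / 5) * (1:ℝ) ^ ((2 - s) / 5 - 1)) 1 :=
      Real.hasDerivAt_rpow_const (Or.inl one_ne_zero)
    have hd2 : HasDerivAt (fun t : ℝ => t ^ ((2 + s) / 5))
        (((2 + s) / 5) * (1:ℝ) ^ ((2 + s) / 5 - 1)) 1 :=
      Real.hasDerivAt_rpow_const (Or.inl one_ne_zero)
    have hd3 : HasDerivAt (fun t : ℝ => t ^ 2) (((2:ℕ) : ℝ) * (1:ℝ) ^ (2 - 1)) 1 :=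
      hasDerivAt_pow 2 1
    have hu : HasDerivAt u
        (a * (((2 - s) / 5) * (1:ℝ) ^ ((2 - s) / 5 - 1)) - 4 * 1
          + b * (((2 + s) / 5) * (1:ℝ) ^ ((2 + s) / 5 - 1))
          - (5 * c / 9) * (((2:ℕ) : ℝ) * (1:ℝ) ^ (2 - 1))) 1 :=
      (((hd1.const_mul a).sub ((hasDerivAt_id 1).const_mul 4)).add
        (hd2.const_mul b)).sub (hd3.const_mul (5 * c / 9))
    rw [hu.deriv]
    rw [Real.one_rpow, Real.one_rpow]
    push_cast
    linear_combination (-1/45) * hc3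
end

section
/- Let m > 0 and 0 < k < 1 be real numbers. With β(k) = 2√19·k^((8+√19)/5) - (8+√19)·k^((2√19)/5) + (8-√19) (which is strictly positive for 0 < k < 1), a(k) = ((10m + 4(√19-3))·k^((8+√19)/5) - 10(m+2)·k^((2√19)/5) + 4(8-√19)·k^((3+√19)/5)) / β(k), b(k) = (-(8+√19)·a(k) + 10(m+2))/(8-√19), c(k) = (9/50)·(-(√19-2)·a(k) + (√19+2)·b(k) + 10(m-2)), and u_k(t) = a(k)·t^((2-√19)/5) - 4t + b(k)·t^((2+√19)/5) - (5·c(k)/9)·t², one has the identity deriv u_k k - 2m = α(k)/β(k), where α(k) = 2((8-√19)m - 2(√19+1))·k^(1+(2√19)/5) - 4√19(m-2)·k^((8+√19)/5) + 2((8+√19)m - 2(√19-1))·k^((2√19)/5) - 2((8+√19)m + 2(√19-1))·k + 4√19(m+2)·k^((√19-3)/5) - 2((8-√19)m + 2(√19+1)). -/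
lemma expStrict (x y p q : ℝ) (hxy : x ≠ y) (hp : 0 < p) (hq : 0 < q)
    (hpq : p + q = 1) : Real.exp (p * x + q * y) < p * Real.exp x + q * Real.exp y := by
  have := strictConvexOn_exp.2 (Set.mem_univ x) (Set.mem_univ y) hxy hp hq hpq
  simpa using this

set_option maxHeartbeats 2000000 in
set_option maxRecDepth 100000 in
/-- with the explicit coefficients below, the defect of the fourth boundary
condition satisfies `u_k'(k) - 2m = α(k)/β(k)`. -/
theorem stmt15 (m k : ℝ) (hm : 0 < m) (hk0 : 0 < k) (hk1 : k < 1) :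
    let β : ℝ := 2 * Real.sqrt 19 * k ^ ((8 + Real.sqrt 19) / 5)
      - (8 + Real.sqrt 19) * k ^ (2 * Real.sqrt 19 / 5) + (8 - Real.sqrt 19)
    let a : ℝ := ((10 * m + 4 * (Real.sqrt 19 - 3)) * k ^ ((8 + Real.sqrt 19) / 5)
      - 10 * (m + 2) * k ^ (2 * Real.sqrt 19 / 5)
      + 4 * (8 - Real.sqrt 19) * k ^ ((3 + Real.sqrt 19) / 5)) / β
    let b : ℝ := (-(8 + Real.sqrt 19) * a + 10 * (m + 2)) / (8 - Real.sqrt 19)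
    let c : ℝ := (9 / 50) * (-(Real.sqrt 19 - 2) * a + (Real.sqrt 19 + 2) * b + 10 * (m - 2))
    let u : ℝ → ℝ := fun t =>
      a * t ^ ((2 - Real.sqrt 19) / 5) - 4 * t + b * t ^ ((2 + Real.sqrt 19) / 5)
        - (5 * c / 9) * t ^ 2
    let α : ℝ :=
      2 * ((8 - Real.sqrt 19) * m - 2 * (Real.sqrt 19 + 1)) * k ^ (1 + 2 * Real.sqrt 19 / 5)
        - 4 * Real.sqrt 19 * (m - 2) * k ^ ((8 + Real.sqrt 19) / 5)
        + 2 * ((8 + Real.sqrt 19) * m - 2 * (Real.sqrt 19 - 1)) * k ^ (2 * Real.sqrt 19 / 5)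
        - 2 * ((8 + Real.sqrt 19) * m + 2 * (Real.sqrt 19 - 1)) * k
        + 4 * Real.sqrt 19 * (m + 2) * k ^ ((Real.sqrt 19 - 3) / 5)
        - 2 * ((8 - Real.sqrt 19) * m + 2 * (Real.sqrt 19 + 1))
    0 < β ∧ deriv u k - 2 * m = α / β := by
  intro β a b c u α
  set s : ℝ := Real.sqrt 19 with hsdef
  have hs19 : s * s = 19 := Real.mul_self_sqrt (by norm_num)
  have hs0 : 0 ≤ s := Real.sqrt_nonneg 19
  have hs5 : s < 5 := by nlinarith
  have hs4 : 4 < s := by nlinarith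
  have hL : Real.log k < 0 := Real.log_neg hk0 hk1
  have h8s : (0:ℝ) < 8 + s := by linarith
  -- β > 0
  have hβ : 0 < β := by
    have hne : ((8 + s) / 5) * Real.log k ≠ (0:ℝ) := by
      intro h
      rcases mul_eq_zero.1 h with h | h
      · have : (8:ℝ) + s = 0 := by field_simp at h; linarith [h]
        linarith
      · linarith [h ▸ hL]
    have key := expStrict (((8 + s) / 5) * Real.log k) 0 (2 * s / (8 + s)) ((8 - s) / (8 + s))
      hne (div_pos (by linarith) h8s) (div_pos (by linarith) h8s) (by field_simp; ring)
    simp only [mul_zero, add_zero, Real.exp_zero, mul_one] at key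
    have e1 : Real.exp (2 * s / (8 + s) * ((8 + s) / 5 * Real.log k)) = k ^ (2 * s / 5) := by
      rw [Real.rpow_def_of_pos hk0]; congr 1; field_simp
    have e2 : Real.exp ((8 + s) / 5 * Real.log k) = k ^ ((8 + s) / 5) := by
      rw [Real.rpow_def_of_pos hk0]; ring_nf
    rw [e1, e2] at key
    have key2 := mul_lt_mul_of_pos_left key h8s
    have hβeq : β = 2 * s * k ^ ((8 + s) / 5) - (8 + s) * k ^ (2 * s / 5) + (8 - s) := rfl
    rw [hβeq]
    have expand : (8 + s) * (2 * s / (8 + s) * k ^ ((8 + s) / 5) + (8 - s) / (8 + s))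
        = 2 * s * k ^ ((8 + s) / 5) + (8 - s) := by field_simp
    rw [expand] at key2
    linarith
  refine ⟨hβ, ?_⟩
  -- derivative
  have hd : HasDerivAt u
      (a * ((2 - s) / 5 * k ^ ((2 - s) / 5 - 1)) - 4 * 1
        + b * ((2 + s) / 5 * k ^ ((2 + s) / 5 - 1))
        - 5 * c / 9 * (2 * k ^ 1)) k := by
    have h1 := (Real.hasDerivAt_rpow_const (x := k) (p := (2 - s) / 5)
      (Or.inl hk0.ne')).const_mul a
    have h2 := (hasDerivAt_id k).const_mul (4 : ℝ)
    have h3 := (Real.hasDerivAt_rpow_const (x := k) (p := (2 + s) / 5)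
      (Or.inl hk0.ne')).const_mul b
    have h4 := (hasDerivAt_pow 2 k).const_mul (5 * c / 9)
    have := ((h1.sub h2).add h3).sub h4
    exact this.congr_deriv (by norm_num)
  rw [hd.deriv]
  -- powers of w and v
  set w : ℝ := k ^ ((1 : ℝ) / 5) with hw
  set v : ℝ := k ^ (s / 5) with hv
  have hwpos : 0 < w := Real.rpow_pos_of_pos hk0 _
  have hvpos : 0 < v := Real.rpow_pos_of_pos hk0 _
  have hwn : ∀ n : ℕ, w ^ n = k ^ ((n : ℝ) / 5) := by
    intro n
    rw [hw, ← Real.rpow_natCast (k ^ ((1 : ℝ) / 5)) n, ← Real.rpow_mul hk0.le]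
    congr 1; ring
  have hmul : ∀ p q : ℝ, k ^ p * k ^ q = k ^ (p + q) :=
    fun p q => (Real.rpow_add hk0 p q).symm
  have hE1 : k ^ ((8 + s) / 5) = w ^ 8 * v := by
    rw [hwn 8, hv, hmul]; congr 1; push_cast; ring
  have hE2 : k ^ (2 * s / 5) = v ^ 2 := by
    rw [hv, ← Real.rpow_natCast (k ^ (s / 5)) 2, ← Real.rpow_mul hk0.le]
    congr 1; push_cast; ring
  have hE3 : k ^ ((3 + s) / 5) = w ^ 3 * v := by
    rw [hwn 3, hv, hmul]; congr 1; push_cast; ring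
  have hE4 : k ^ ((2 - s) / 5 - 1) = (w ^ 3 * v)⁻¹ := by
    rw [show (2 - s) / 5 - 1 = -((3 + s) / 5) by ring, Real.rpow_neg hk0.le, hE3]
  have h35 : k ^ (-(3 / 5) : ℝ) = (w ^ 3)⁻¹ := by
    rw [Real.rpow_neg hk0.le, hwn 3]; norm_num
  have hE5 : k ^ ((2 + s) / 5 - 1) = v * (w ^ 3)⁻¹ := by
    rw [show (2 + s) / 5 - 1 = s / 5 + (-(3 / 5)) by ring, Real.rpow_add hk0, h35, hv]
  have hE7 : k ^ ((s - 3) / 5) = v * (w ^ 3)⁻¹ := by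
    rw [show (s - 3) / 5 = s / 5 + (-(3 / 5)) by ring, Real.rpow_add hk0, h35, hv]
  have hE8 : k = w ^ 5 := by rw [hwn 5]; norm_num
  have hE6 : k ^ (1 + 2 * s / 5) = w ^ 5 * v ^ 2 := by
    rw [Real.rpow_add hk0, Real.rpow_one, hE2, hE8]
  have hβne : 2 * s * (w ^ 8 * v) - (8 + s) * v ^ 2 + (8 - s) ≠ 0 := by
    rw [← hE1, ← hE2]; exact ne_of_gt hβ
  have h8ne : (8 : ℝ) - s ≠ 0 := by linarith
  rw [eq_div_iff (ne_of_gt hβ)]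
  unfold α c b a β
  simp only [← hsdef]
  simp only [hE1, hE2, hE3, hE4, hE5, hE6, hE7]
  rw [hE8]
  rw [pow_one]
  have hD : v * (s * w ^ 8 * 2 - v * (8 + s)) + (8 - s) ≠ 0 := by
    intro h; apply hβne; linear_combination h
  field_simp
  linear_combination (200*s*w^8 - 200*s*w^3 - 200*s*v^2*w^8 + 200*s*v^2*w^3 - 1600*w^8 + 1600*w^3 - 1600*v^2*w^3 + 1600*v^2*w^8) * hs19
end
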